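/- arXiv:1909.09030 — 7 statements merged into one kernel-verified Lean document; each statement's English description precedes it below -/
import Mathlib

section
/- If 𝒮 = (S_1, …, S_n) is a compatible sequence of structurally submodular separation systems inside a universe of separations U, and 𝒫 is a robust set of profiles in 𝒮, then there is a nested set N of separations in U which efficiently distinguishes all the distinguishable profiles in 𝒫. -/
/-!
Tree-of-tangles theorem for compatible sequences of structurally submodular
separation systems: if `S 0 ⊆ S 1 ⊆ … ⊆ S n` is a compatible sequence of
structurally submodular separation systems inside a universe `U` and `Ps` is a
robust set of profiles in the sequence, then there is a nested set of
separations in `U` which efficiently distinguishes all the distinguishable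
profiles in `Ps`.
-/

variable {U : Type*}

/-- `star` is an order-reversing involution: `s** = s` and `r ≤ s ↔ s* ≤ r*`. -/
def OrderReversingInvolution [Lattice U] (star : U → U) : Prop :=
  (∀ s : U, star (star s) = s) ∧ ∀ r s : U, r ≤ s ↔ star s ≤ star r

/-- Two separations are nested if they have comparable orientations. -/
def Nested [Lattice U] (star : U → U) (r s : U) : Prop :=
  r ≤ s ∨ r ≤ star s ∨ star r ≤ s ∨ star r ≤ star s

/-- A `*`-closed set `S` is structurally submodular if for all `r, s ∈ S` at
least one of `r ⊔ s` and `r ⊓ s` lies in `S`. -/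
def StructSubmodular [Lattice U] (S : Set U) : Prop :=
  ∀ r ∈ S, ∀ s ∈ S, r ⊔ s ∈ S ∨ r ⊓ s ∈ S

/-- `O` is an orientation of `S`: it contains, for each `s ∈ S`, exactly one
of `s` and `star s`. -/
def Orients [Lattice U] (star : U → U) (S O : Set U) : Prop :=
  O ⊆ S ∧ ∀ s ∈ S, (s ∈ O ∨ star s ∈ O) ∧ (s ∈ O → star s ∈ O → s = star s)

/-- `O` is consistent: there are no `r, s ∈ O` with `star r < s`. -/
def Consistent [Lattice U] (star : U → U) (O : Set U) : Prop :=
  ∀ r ∈ O, ∀ s ∈ O, ¬ star r < s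

/-- A profile of `S` is a consistent orientation `P` of `S` such that for all
`r, s ∈ P` we have `star r ⊓ star s ∉ P`. -/
def IsProfile [Lattice U] (star : U → U) (S P : Set U) : Prop :=
  Orients star S P ∧ Consistent star P ∧
    ∀ r ∈ P, ∀ s ∈ P, star r ⊓ star s ∉ P

/-- `s` distinguishes `P` and `P'`: one orientation of `s` lies in `P` and the
other in `P'`. -/
def Distinguishes [Lattice U] (star : U → U) (s : U) (P P' : Set U) : Prop :=
  (s ∈ P ∧ star s ∈ P') ∨ (star s ∈ P ∧ s ∈ P')

/-- The four corner separations of `a` and `b`, as a function on `Fin 4`. -/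
def corners [Lattice U] (star : U → U) (a b : U) : Fin 4 → U :=
  ![a ⊔ b, a ⊔ star b, star a ⊔ b, star a ⊔ star b]

/-- A nested (ascending) sequence of `*`-closed structurally submodular
separation systems is compatible if for all `i ≤ j`, `a ∈ S i` and `b ∈ S j`,
either `S i` contains at least two corner separations of `a` and `b`, or
`S j` contains at least three of them. -/
def Compatible [Lattice U] (star : U → U) {n : ℕ} (S : Fin (n + 1) → Set U) : Prop :=
  ∀ i j : Fin (n + 1), i ≤ j → ∀ a ∈ S i, ∀ b ∈ S j,
    (∃ k₁ k₂ : Fin 4, k₁ ≠ k₂ ∧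
      corners star a b k₁ ∈ S i ∧ corners star a b k₂ ∈ S i) ∨
    (∃ k₁ k₂ k₃ : Fin 4, k₁ ≠ k₂ ∧ k₁ ≠ k₃ ∧ k₂ ≠ k₃ ∧
      corners star a b k₁ ∈ S j ∧ corners star a b k₂ ∈ S j ∧
      corners star a b k₃ ∈ S j)

/-- `s` distinguishes `P` and `P'` efficiently in the sequence `S`: `s` lies
in the top system, distinguishes `P` and `P'`, and lies in every `S i` that
contains some separation distinguishing `P` and `P'`. -/
def EffDistSeq [Lattice U] (star : U → U) {n : ℕ} (S : Fin (n + 1) → Set U)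
    (s : U) (P P' : Set U) : Prop :=
  s ∈ S (Fin.last n) ∧ Distinguishes star s P P' ∧
    ∀ i : Fin (n + 1), (∃ t ∈ S i, Distinguishes star t P P') → s ∈ S i

/-- A set `Ps` of profiles in the sequence `S` is robust if for all
`P, Q, Q' ∈ Ps`, every `r` with `r ∈ Q ∩ Q'` and `star r ∈ P`, and every
`s ∈ S j` distinguishing `Q` and `Q'` efficiently, there is an orientation
`s'` of `s` with `star r ⊔ s' ∈ P` or `r ⊔ s' ∈ S j`. -/
def RobustSeq [Lattice U] (star : U → U) {n : ℕ} (S : Fin (n + 1) → Set U)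
    (Ps : Set (Set U)) : Prop :=
  ∀ P ∈ Ps, ∀ Q ∈ Ps, ∀ Q' ∈ Ps, ∀ r : U, r ∈ Q → r ∈ Q' → star r ∈ P →
    ∀ j : Fin (n + 1), ∀ s ∈ S j, EffDistSeq star S s Q Q' →
      ∃ s', (s' = s ∨ s' = star s) ∧ (star r ⊔ s' ∈ P ∨ r ⊔ s' ∈ S j)

set_option maxHeartbeats 1600000

section TotHelpers
variable [Lattice U] {star : U → U}

lemma tot_ss (h : OrderReversingInvolution star) (s : U) : star (star s) = s := h.1 s

lemma tot_le_star_iff (h : OrderReversingInvolution star) {r s : U} :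
    r ≤ star s ↔ s ≤ star r := by
  constructor
  · intro hh
    have := (h.2 r (star s)).mp hh
    rwa [tot_ss h] at this
  · intro hh
    have := (h.2 s (star r)).mp hh
    rwa [tot_ss h] at this

lemma tot_star_le_iff (h : OrderReversingInvolution star) {r s : U} :
    star r ≤ s ↔ star s ≤ r := by
  constructor
  · intro hh
    have := (h.2 (star r) s).mp hh
    rwa [tot_ss h] at this
  · intro hh
    have := (h.2 (star s) r).mp hh
    rwa [tot_ss h] at this

lemma tot_star_sup (h : OrderReversingInvolution star) (r s : U) :
    star (r ⊔ s) = star r ⊓ star s := by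
  apply le_antisymm
  · exact le_inf ((h.2 r (r ⊔ s)).mp le_sup_left) ((h.2 s (r ⊔ s)).mp le_sup_right)
  · rw [tot_le_star_iff h]
    exact sup_le ((tot_le_star_iff h).mpr inf_le_left) ((tot_le_star_iff h).mpr inf_le_right)

lemma tot_nested_symm (h : OrderReversingInvolution star) {a b : U} :
    Nested star a b → Nested star b a := by
  rintro (h1 | h1 | h1 | h1)
  · exact Or.inr (Or.inr (Or.inr ((h.2 a b).mp h1)))
  · exact Or.inr (Or.inl ((tot_le_star_iff h).mp h1))
  · exact Or.inr (Or.inr (Or.inl ((tot_star_le_iff h).mp h1)))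
  · exact Or.inl ((h.2 b a).mpr h1)

lemma tot_nested_starl (h : OrderReversingInvolution star) {a b : U} :
    Nested star (star a) b ↔ Nested star a b := by
  unfold Nested
  rw [tot_ss h a]
  tauto

lemma tot_nested_starr (h : OrderReversingInvolution star) {a b : U} :
    Nested star a (star b) ↔ Nested star a b := by
  unfold Nested
  rw [tot_ss h b]
  tauto

lemma tot_corner_nested (h : OrderReversingInvolution star) {u σ τ : U}
    (hus : Nested star u σ) (hut : Nested star u τ) (hn : ¬ σ ≤ star τ) :
    Nested star u (τ ⊔ σ) := by
  rcases hus with h1 | h1 | h1 | h1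
  · exact Or.inl (h1.trans le_sup_right)
  · rcases hut with h2 | h2 | h2 | h2
    · exact Or.inl (h2.trans le_sup_left)
    · refine Or.inr (Or.inl ?_)
      rw [tot_star_sup h]
      exact le_inf h2 h1
    · exact Or.inr (Or.inr (Or.inl (h2.trans le_sup_left)))
    · have hτu : τ ≤ u := (h.2 τ u).mpr h2
      exact absurd ((tot_le_star_iff h).mp (hτu.trans h1)) hn
  · exact Or.inr (Or.inr (Or.inl (h1.trans le_sup_right)))
  · have hσu : σ ≤ u := (h.2 σ u).mpr h1
    rcases hut with h2 | h2 | h2 | h2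
    · exact Or.inl (h2.trans le_sup_left)
    · exact absurd (hσu.trans h2) hn
    · exact Or.inr (Or.inr (Or.inl (h2.trans le_sup_left)))
    · refine Or.inr (Or.inr (Or.inr ?_))
      rw [tot_star_sup h]
      exact le_inf h2 h1

lemma tot_corner_corner (h : OrderReversingInvolution star) {τ₁ τ₂ σ₁ σ₂ : U}
    (hrel : τ₁ ≤ τ₂ ∨ τ₂ ≤ τ₁ ∨ τ₁ ≤ star τ₂) (hσ : σ₁ = σ₂ ∨ σ₁ = star σ₂) :
    Nested star (star τ₁ ⊔ σ₁) (star τ₂ ⊔ σ₂) := by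
  rcases hσ with rfl | rfl
  · rcases hrel with h1 | h1 | h1
    · exact tot_nested_symm h (Or.inl (sup_le_sup_right ((h.2 τ₁ τ₂).mp h1) _))
    · exact Or.inl (sup_le_sup_right ((h.2 τ₂ τ₁).mp h1) _)
    · refine Or.inr (Or.inr (Or.inl ?_))
      rw [tot_star_sup h, tot_ss h]
      exact le_trans (inf_le_left.trans h1) le_sup_left
  · refine Or.inr (Or.inr (Or.inl ?_))
    rw [tot_star_sup h, tot_ss h, tot_ss h]
    exact le_trans inf_le_right le_sup_right

lemma tot_prof_not_star {Sa P : Set U} (hP : IsProfile star Sa P) {r : U} (hr : r ∈ P) :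
    star r ∉ P := by
  have h2 := hP.2.2 r hr r hr
  simpa [inf_idem] using h2

lemma tot_prof_down (h : OrderReversingInvolution star) {Sa P : Set U}
    (hP : IsProfile star Sa P) {z x : U} (hz : z ∈ Sa) (hx : x ∈ P) (hzx : z ≤ x) :
    z ∈ P := by
  rcases (hP.1.2 z hz).1 with hh | hh
  · exact hh
  rcases eq_or_lt_of_le hzx with rfl | hlt
  · exact absurd hh (tot_prof_not_star hP hx)
  · have := hP.2.1 (star z) hh x hx
    rw [tot_ss h] at this
    exact absurd hlt this

lemma tot_prof_join (h : OrderReversingInvolution star) {Sa P : Set U}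
    (hP : IsProfile star Sa P) {r s : U} (hr : r ∈ P) (hs : s ∈ P) (hm : r ⊔ s ∈ Sa) :
    r ⊔ s ∈ P := by
  rcases (hP.1.2 _ hm).1 with hh | hh
  · exact hh
  rw [tot_star_sup h] at hh
  exact absurd hh (hP.2.2 r hr s hs)

lemma tot_prof_rel (h : OrderReversingInvolution star) {Sa P : Set U}
    (hP : IsProfile star Sa P) {τ₁ τ₂ : U} (h1 : τ₁ ∈ P) (h2 : τ₂ ∈ P)
    (hn : Nested star τ₁ τ₂) : τ₁ ≤ τ₂ ∨ τ₂ ≤ τ₁ ∨ τ₁ ≤ star τ₂ := by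
  rcases hn with hh | hh | hh | hh
  · exact Or.inl hh
  · exact Or.inr (Or.inr hh)
  · rcases eq_or_lt_of_le hh with heq | hlt
    · exact absurd h2 (by rw [← heq]; exact tot_prof_not_star hP h1)
    · exact absurd hlt (hP.2.1 τ₁ h1 τ₂ h2)
  · exact Or.inr (Or.inl ((h.2 τ₂ τ₁).mpr hh))

end TotHelpers

/-- **Tree-of-tangles theorem for compatible sequences of structurally
submodular separation systems.** -/
theorem tree_of_tangles_compatible_sequence [Lattice U] [Fintype U]
    (star : U → U) (hstar : OrderReversingInvolution star)
    {n : ℕ} (S : Fin (n + 1) → Set U)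
    (hmono : ∀ i j : Fin (n + 1), i ≤ j → S i ⊆ S j)
    (hclosed : ∀ i, ∀ s ∈ S i, star s ∈ S i)
    (hsub : ∀ i, StructSubmodular (S i))
    (hcomp : Compatible star S)
    (Ps : Set (Set U)) (hprof : ∀ P ∈ Ps, ∃ i, IsProfile star (S i) P)
    (hrobust : RobustSeq star S Ps) :
    ∃ N : Set U, (∀ a ∈ N, ∀ b ∈ N, Nested star a b) ∧
      ∀ P ∈ Ps, ∀ P' ∈ Ps, (∃ s ∈ S (Fin.last n), Distinguishes star s P P') →
        ∃ t ∈ N, EffDistSeq star S t P P' := by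
  classical
  haveI : Finite Prop := Finite.of_equiv Bool Equiv.propEquivBool.symm
  haveI : Finite (Set U) := inferInstanceAs (Finite (U → Prop))
  set Dg : Set U × Set U → Prop := fun pq =>
    pq.1 ∈ Ps ∧ pq.2 ∈ Ps ∧ ∃ u ∈ S (Fin.last n), Distinguishes star u pq.1 pq.2 with hDgdef
  -- minimal index of a pair
  have hminex : ∀ pq : Set U × Set U, ∃ i : Fin (n + 1), Dg pq →
      ((∃ u ∈ S i, Distinguishes star u pq.1 pq.2) ∧
        ∀ j : Fin (n + 1), (∃ u ∈ S j, Distinguishes star u pq.1 pq.2) → i ≤ j) := by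
    intro pq
    by_cases h : Dg pq
    · obtain ⟨-, -, u, hu, hdu⟩ := h
      have hKne : {m : ℕ | ∃ i : Fin (n + 1), i.val = m ∧
          ∃ u ∈ S i, Distinguishes star u pq.1 pq.2}.Nonempty :=
        ⟨(Fin.last n).val, Fin.last n, rfl, u, hu, hdu⟩
      obtain ⟨i, hival, hiw⟩ := Nat.sInf_mem hKne
      refine ⟨i, fun _ => ⟨hiw, ?_⟩⟩
      intro j hj
      have hle : sInf {m : ℕ | ∃ i : Fin (n + 1), i.val = m ∧
          ∃ u ∈ S i, Distinguishes star u pq.1 pq.2} ≤ j.val :=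
        Nat.sInf_le ⟨j, rfl, hj⟩
      rw [← hival] at hle
      exact Fin.le_def.mpr hle
    · exact ⟨0, fun hc => absurd hc h⟩
  choose idx hidx using hminex
  set Cov : Set U → Set U × Set U → Prop :=
    fun N' pq => ∃ t ∈ N', EffDistSeq star S t pq.1 pq.2 with hCovdef
  have effChar : ∀ pq : Set U × Set U, Dg pq → ∀ u : U,
      EffDistSeq star S u pq.1 pq.2 ↔
        (Distinguishes star u pq.1 pq.2 ∧ u ∈ S (idx pq)) := by
    intro pq h u
    constructor
    · rintro ⟨h1, h2, h3⟩
      exact ⟨h2, h3 (idx pq) ((hidx pq h).1)⟩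
    · rintro ⟨hd, hm⟩
      refine ⟨hmono (idx pq) (Fin.last n) (Fin.le_last _) hm, hd, ?_⟩
      intro i hi
      exact hmono (idx pq) i ((hidx pq h).2 i hi) hm
  have hPfin : (setOf Dg).Finite := Set.toFinite _
  set PF := hPfin.toFinset with hPFdef
  set B := PF.card with hBdef
  set W : Fin (n + 1) → ℕ := fun k => (B + 1) ^ (n - k.val) with hWdef
  have hWpos : ∀ k, 0 < W k := fun k => pow_pos (Nat.succ_pos B) _
  set f : Set U → Set U × Set U → ℕ :=
    fun N' pq => if Cov N' pq then W (idx pq) else 0 with hfdef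
  set μ : Set U → ℕ := fun N' => ∑ pq ∈ PF, f N' pq with hμdef
  have hμbnd : ∀ N' : Set U, μ N' ≤ ∑ pq ∈ PF, W (idx pq) := by
    intro N'
    apply Finset.sum_le_sum
    intro pq _
    simp only [hfdef]
    split
    · exact le_refl _
    · exact Nat.zero_le _
  have hMSne : {m : ℕ | ∃ N' : Set U,
      (∀ a ∈ N', ∀ b ∈ N', Nested star a b) ∧ μ N' = m}.Nonempty :=
    ⟨μ ∅, ∅, fun a ha => absurd ha (Set.notMem_empty a), rfl⟩
  have hMSbdd : BddAbove {m : ℕ | ∃ N' : Set U,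
      (∀ a ∈ N', ∀ b ∈ N', Nested star a b) ∧ μ N' = m} := by
    refine ⟨∑ pq ∈ PF, W (idx pq), ?_⟩
    rintro m ⟨N', -, rfl⟩
    exact hμbnd N'
  obtain ⟨N, hNnest, hNμ⟩ := Nat.sSup_mem hMSne hMSbdd
  have hNmax : ∀ N' : Set U, (∀ a ∈ N', ∀ b ∈ N', Nested star a b) → μ N' ≤ μ N := by
    intro N' hn'
    rw [hNμ]
    exact le_csSup hMSbdd ⟨N', hn', rfl⟩
  suffices hcov : ∀ pq : Set U × Set U, Dg pq → Cov N pq by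
    refine ⟨N, hNnest, ?_⟩
    intro P hP P' hP' hd
    exact hcov (P, P') ⟨hP, hP', hd⟩
  by_contra hno
  push_neg at hno
  obtain ⟨p, hDgp, hpNotCov⟩ := hno
  set i₀ := idx p with hi₀
  obtain ⟨a, hPa⟩ := hprof p.1 hDgp.1
  obtain ⟨b, hQb⟩ := hprof p.2 hDgp.2.1
  set crossN : U → Set U := fun v => {u ∈ N | ¬ Nested star v u} with hcrossdef
  have hAPne : ∃ u, Distinguishes star u p.1 p.2 ∧ u ∈ S i₀ := by
    obtain ⟨u, hu, hdu⟩ := (hidx p hDgp).1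
    exact ⟨u, hdu, hu⟩
  have hKSne : {k : ℕ | ∃ u, (Distinguishes star u p.1 p.2 ∧ u ∈ S i₀) ∧
      (crossN u).ncard = k}.Nonempty := by
    obtain ⟨u, hu⟩ := hAPne
    exact ⟨(crossN u).ncard, u, hu, rfl⟩
  obtain ⟨s, hsAP, hscard⟩ := Nat.sInf_mem hKSne
  have hsmin : ∀ u, (Distinguishes star u p.1 p.2 ∧ u ∈ S i₀) →
      (crossN s).ncard ≤ (crossN u).ncard := by
    intro u hu
    rw [hscard]
    exact Nat.sInf_le ⟨u, hu, rfl⟩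
  have hsdist : Distinguishes star s p.1 p.2 := hsAP.1
  have hsSi : s ∈ S i₀ := hsAP.2
  obtain ⟨sh, hshor, hshP, hshQ⟩ :
      ∃ sh, (sh = s ∨ sh = star s) ∧ sh ∈ p.1 ∧ star sh ∈ p.2 := by
    rcases hsdist with ⟨h1, h2⟩ | ⟨h1, h2⟩
    · exact ⟨s, Or.inl rfl, h1, h2⟩
    · exact ⟨star s, Or.inr rfl, h1, by rwa [tot_ss hstar]⟩
  have hai : i₀ ≤ a :=
    (hidx p hDgp).2 a ⟨sh, hPa.1.1 hshP, Or.inl ⟨hshP, hshQ⟩⟩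
  have hbi : i₀ ≤ b :=
    (hidx p hDgp).2 b ⟨star sh, hQb.1.1 hshQ,
      Or.inr ⟨by rw [tot_ss hstar]; exact hshP, hshQ⟩⟩
  set T := crossN s with hTdef
  have hTN : T ⊆ N := fun u hu => hu.1
  have hTfin : T.Finite := Set.toFinite _
  have heffs : EffDistSeq star S s p.1 p.2 := (effChar p hDgp s).mpr ⟨hsdist, hsSi⟩
  -- a "good" corner over an element of T would contradict the minimality of s
  have hgood : ∀ τ₀ : U, τ₀ ∈ p.1 → τ₀ ∈ p.2 → ∀ t ∈ T, (τ₀ = t ∨ τ₀ = star t) →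
      ∀ σ', (σ' = s ∨ σ' = star s) → τ₀ ⊔ σ' ∈ S i₀ → False := by
    intro τ₀ hτP hτQ t ht hτor σ' hσor hmem
    have hσsh : σ' = sh ∨ σ' = star sh := by
      rcases hσor with he1 | he1 <;> rcases hshor with he2 | he2
      · exact Or.inl (he1.trans he2.symm)
      · exact Or.inr (by rw [he1, he2, tot_ss hstar])
      · exact Or.inr (by rw [he1, he2])
      · exact Or.inl (he1.trans he2.symm)
    have hgd : Distinguishes star (τ₀ ⊔ σ') p.1 p.2 := by
      rcases hσsh with rfl | heq
      · refine Or.inl ⟨tot_prof_join hstar hPa hτP hshP (hmono _ _ hai hmem), ?_⟩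
        apply tot_prof_down hstar hQb (hclosed b _ (hmono _ _ hbi hmem)) hshQ
        rw [tot_star_sup hstar]
        exact inf_le_right
      · subst heq
        refine Or.inr ⟨?_, tot_prof_join hstar hQb hτQ hshQ (hmono _ _ hbi hmem)⟩
        apply tot_prof_down hstar hPa (hclosed a _ (hmono _ _ hai hmem)) hshP
        rw [tot_star_sup hstar, tot_ss hstar]
        exact inf_le_right
    have hsub2 : crossN (τ₀ ⊔ σ') ⊆ T \ {t} := by
      intro u hu
      obtain ⟨huN, hnot⟩ := hu
      refine ⟨?_, ?_⟩
      · by_contra hx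
        have hNsu' : Nested star s u := by
          by_contra hy
          exact hx ⟨huN, hy⟩
        have hus' : Nested star u σ' := by
          rcases hσor with rfl | rfl
          · exact tot_nested_symm hstar hNsu'
          · rw [tot_nested_starr hstar]
            exact tot_nested_symm hstar hNsu'
        have hut' : Nested star u t := hNnest u huN t (hTN ht)
        have huτ' : Nested star u τ₀ := by
          rcases hτor with rfl | rfl
          · exact hut'
          · rw [tot_nested_starr hstar]
            exact hut'
        have hn' : ¬ σ' ≤ star τ₀ := by
          intro hle2
          apply ht.2
          rcases hσor with rfl | rfl <;> rcases hτor with rfl | rfl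
          · exact Or.inr (Or.inl hle2)
          · rw [tot_ss hstar] at hle2
            exact Or.inl hle2
          · exact Or.inr (Or.inr (Or.inr hle2))
          · rw [tot_ss hstar] at hle2
            exact Or.inr (Or.inr (Or.inl hle2))
        exact hnot (tot_nested_symm hstar (tot_corner_nested hstar hus' huτ' hn'))
      · intro hx
        rw [Set.mem_singleton_iff] at hx
        subst hx
        apply hnot
        apply tot_nested_symm hstar
        rcases hτor with rfl | rfl
        · exact Or.inl le_sup_left
        · exact Or.inr (Or.inr (Or.inl le_sup_left))
    have hcard : (crossN (τ₀ ⊔ σ')).ncard < (crossN s).ncard := by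
      calc (crossN (τ₀ ⊔ σ')).ncard ≤ (T \ {t}).ncard :=
            Set.ncard_le_ncard hsub2 (Set.toFinite _)
        _ < T.ncard := Set.ncard_diff_singleton_lt_of_mem ht hTfin
    exact absurd (hsmin _ ⟨hgd, hmem⟩) (not_le.mpr hcard)
  -- the recovery lemma
  have recover : ∀ pq : Set U × Set U, Dg pq → idx pq ≤ i₀ → ∀ t ∈ T,
      EffDistSeq star S t pq.1 pq.2 →
      ∃ d τ σ, (τ = t ∨ τ = star t) ∧ τ ∈ p.1 ∧ τ ∈ p.2 ∧ (σ = s ∨ σ = star s) ∧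
        d = star τ ⊔ σ ∧ EffDistSeq star S d pq.1 pq.2 := by
    intro pq hDgq hle t ht hefft
    have htdist : Distinguishes star t pq.1 pq.2 := hefft.2.1
    have htSj : t ∈ S (idx pq) := ((effChar pq hDgq t).mp hefft).2
    have htSi : t ∈ S i₀ := hmono _ _ hle htSj
    have htP : t ∈ p.1 ∨ star t ∈ p.1 := (hPa.1.2 t (hmono _ _ hai htSi)).1
    have htQ : t ∈ p.2 ∨ star t ∈ p.2 := (hQb.1.2 t (hmono _ _ hbi htSi)).1
    have hnotd : ∀ τ : U, (τ = t ∨ τ = star t) → τ ∈ p.1 → star τ ∈ p.2 → False := by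
      intro τ hτor h1 h2
      have hτSj : τ ∈ S (idx pq) := by
        rcases hτor with rfl | rfl
        · exact htSj
        · exact hclosed _ _ htSj
      have hge : i₀ ≤ idx pq := (hidx p hDgp).2 _ ⟨τ, hτSj, Or.inl ⟨h1, h2⟩⟩
      have heq : idx pq = i₀ := le_antisymm hle hge
      have hdt : Distinguishes star t p.1 p.2 := by
        rcases hτor with rfl | rfl
        · exact Or.inl ⟨h1, h2⟩
        · rw [tot_ss hstar] at h2
          exact Or.inr ⟨h1, h2⟩
      exact hpNotCov ⟨t, hTN ht, (effChar p hDgp t).mpr ⟨hdt, hmono _ _ (le_of_eq heq) htSj⟩⟩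
    obtain ⟨τ₀, hτor, hτP, hτQ⟩ :
        ∃ τ₀, (τ₀ = t ∨ τ₀ = star t) ∧ τ₀ ∈ p.1 ∧ τ₀ ∈ p.2 := by
      rcases htP with h1 | h1 <;> rcases htQ with h2 | h2
      · exact ⟨t, Or.inl rfl, h1, h2⟩
      · exact (hnotd t (Or.inl rfl) h1 h2).elim
      · exact (hnotd (star t) (Or.inr rfl) h1 (by rwa [tot_ss hstar])).elim
      · exact ⟨star t, Or.inr rfl, h1, h2⟩
    have hG : ∀ σ', (σ' = s ∨ σ' = star s) → τ₀ ⊔ σ' ∉ S i₀ :=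
      fun σ' hσ hmem => hgood τ₀ hτP hτQ t ht hτor σ' hσ hmem
    have hcompat := hcomp (idx pq) i₀ hle t htSj s hsSi
    have hbads : star τ₀ ⊔ s ∈ S (idx pq) ∧ star τ₀ ⊔ star s ∈ S (idx pq) := by
      rcases hτor with rfl | rfl
      · have hkbad : ∀ k : Fin 4, corners star τ₀ s k ∈ S i₀ → k = 2 ∨ k = 3 := by
          intro k hk
          fin_cases k
          · exact absurd hk (hG s (Or.inl rfl))
          · exact absurd hk (hG (star s) (Or.inr rfl))
          · exact Or.inl rfl
          · exact Or.inr rfl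
        rcases hcompat with ⟨k1, k2, hne, m1, m2⟩ | ⟨k1, k2, k3, h12, h13, h23, m1, m2, m3⟩
        · have g1 := hkbad k1 (hmono _ _ hle m1)
          have g2 := hkbad k2 (hmono _ _ hle m2)
          rcases g1 with rfl | rfl <;> rcases g2 with rfl | rfl
          · exact absurd rfl hne
          · exact ⟨m1, m2⟩
          · exact ⟨m2, m1⟩
          · exact absurd rfl hne
        · have g1 := hkbad k1 m1
          have g2 := hkbad k2 m2
          have g3 := hkbad k3 m3
          rcases g1 with rfl | rfl <;> rcases g2 with rfl | rfl <;>
            rcases g3 with rfl | rfl <;>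
            first
              | exact absurd rfl h12
              | exact absurd rfl h13
              | exact absurd rfl h23
      · rw [tot_ss hstar]
        have hkbad : ∀ k : Fin 4, corners star t s k ∈ S i₀ → k = 0 ∨ k = 1 := by
          intro k hk
          fin_cases k
          · exact Or.inl rfl
          · exact Or.inr rfl
          · exact absurd hk (hG s (Or.inl rfl))
          · exact absurd hk (hG (star s) (Or.inr rfl))
        rcases hcompat with ⟨k1, k2, hne, m1, m2⟩ | ⟨k1, k2, k3, h12, h13, h23, m1, m2, m3⟩
        · have g1 := hkbad k1 (hmono _ _ hle m1)
          have g2 := hkbad k2 (hmono _ _ hle m2)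
          rcases g1 with rfl | rfl <;> rcases g2 with rfl | rfl
          · exact absurd rfl hne
          · exact ⟨m1, m2⟩
          · exact ⟨m2, m1⟩
          · exact absurd rfl hne
        · have g1 := hkbad k1 m1
          have g2 := hkbad k2 m2
          have g3 := hkbad k3 m3
          rcases g1 with rfl | rfl <;> rcases g2 with rfl | rfl <;>
            rcases g3 with rfl | rfl <;>
            first
              | exact absurd rfl h12
              | exact absurd rfl h13
              | exact absurd rfl h23
    obtain ⟨th, hthor, hthP', hthQ'⟩ :
        ∃ th, (th = t ∨ th = star t) ∧ th ∈ pq.1 ∧ star th ∈ pq.2 := by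
      rcases htdist with ⟨h1, h2⟩ | ⟨h1, h2⟩
      · exact ⟨t, Or.inl rfl, h1, h2⟩
      · exact ⟨star t, Or.inr rfl, h1, by rwa [tot_ss hstar]⟩
    obtain ⟨R1, R2, hR1, hR2, hsτR1, hτR2, hform⟩ :
        ∃ R1 R2, R1 ∈ Ps ∧ R2 ∈ Ps ∧ star τ₀ ∈ R1 ∧ τ₀ ∈ R2 ∧
          ((R1 = pq.2 ∧ R2 = pq.1) ∨ (R1 = pq.1 ∧ R2 = pq.2)) := by
      have hτth : τ₀ = th ∨ τ₀ = star th := by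
        rcases hτor with he1 | he1 <;> rcases hthor with he2 | he2
        · exact Or.inl (he1.trans he2.symm)
        · exact Or.inr (by rw [he1, he2, tot_ss hstar])
        · exact Or.inr (by rw [he1, he2])
        · exact Or.inl (he1.trans he2.symm)
      rcases hτth with rfl | rfl
      · exact ⟨pq.2, pq.1, hDgq.2.1, hDgq.1, hthQ', hthP', Or.inl ⟨rfl, rfl⟩⟩
      · refine ⟨pq.1, pq.2, hDgq.1, hDgq.2.1, ?_, hthQ', Or.inr ⟨rfl, rfl⟩⟩
        rw [tot_ss hstar]
        exact hthP'
    obtain ⟨s', hs'or, hres⟩ :=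
      hrobust R1 hR1 p.1 hDgp.1 p.2 hDgp.2.1 τ₀ hτP hτQ hsτR1 i₀ s hsSi heffs
    rcases hres with hd | hgm
    swap
    · exact absurd hgm (hG s' hs'or)
    have hdSj : star τ₀ ⊔ s' ∈ S (idx pq) := by
      rcases hs'or with he | he <;> rw [he]
      · exact hbads.1
      · exact hbads.2
    obtain ⟨a', hP'a⟩ := hprof pq.1 hDgq.1
    obtain ⟨b', hQ'b⟩ := hprof pq.2 hDgq.2.1
    have ha'j : idx pq ≤ a' :=
      (hidx pq hDgq).2 a' ⟨th, hP'a.1.1 hthP', Or.inl ⟨hthP', hthQ'⟩⟩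
    have hb'j : idx pq ≤ b' :=
      (hidx pq hDgq).2 b' ⟨star th, hQ'b.1.1 hthQ',
        Or.inr ⟨by rw [tot_ss hstar]; exact hthP', hthQ'⟩⟩
    have hstard_le : star (star τ₀ ⊔ s') ≤ τ₀ := by
      rw [tot_star_sup hstar, tot_ss hstar]
      exact inf_le_left
    have hstardS : star (star τ₀ ⊔ s') ∈ S (idx pq) := hclosed _ _ hdSj
    have hdR2 : star (star τ₀ ⊔ s') ∈ R2 := by
      rcases hform with ⟨hf1, hf2⟩ | ⟨hf1, hf2⟩
      · rw [hf2]
        exact tot_prof_down hstar hP'a (hmono _ _ ha'j hstardS) (hf2 ▸ hτR2) hstard_le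
      · rw [hf2]
        exact tot_prof_down hstar hQ'b (hmono _ _ hb'j hstardS) (hf2 ▸ hτR2) hstard_le
    have hddist : Distinguishes star (star τ₀ ⊔ s') pq.1 pq.2 := by
      rcases hform with ⟨hf1, hf2⟩ | ⟨hf1, hf2⟩
      · exact Or.inr ⟨hf2 ▸ hdR2, hf1 ▸ hd⟩
      · exact Or.inl ⟨hf1 ▸ hd, hf2 ▸ hdR2⟩
    exact ⟨star τ₀ ⊔ s', τ₀, s', hτor, hτP, hτQ, hs'or, rfl,
      (effChar pq hDgq _).mpr ⟨hddist, hdSj⟩⟩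
  -- the surgery
  set RecCond : Set U × Set U → Prop := fun pq =>
    Dg pq ∧ idx pq ≤ i₀ ∧ Cov N pq ∧ ¬ Cov (N \ T) pq with hRCdef
  have hDD : ∀ pq, ∃ d τ σ t, RecCond pq →
      ((τ = t ∨ τ = star t) ∧ t ∈ T ∧ τ ∈ p.1 ∧ τ ∈ p.2 ∧ (σ = s ∨ σ = star s) ∧
        d = star τ ⊔ σ ∧ EffDistSeq star S d pq.1 pq.2) := by
    intro pq
    by_cases h : RecCond pq
    · obtain ⟨hDgq, hle, hcv, hncv⟩ := h
      obtain ⟨t, htN, heff⟩ := hcv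
      have htT : t ∈ T := by
        by_contra hx
        exact hncv ⟨t, ⟨htN, hx⟩, heff⟩
      obtain ⟨d, τ, σ, h1, h2, h3, h4, h5, h6⟩ := recover pq hDgq hle t htT heff
      exact ⟨d, τ, σ, t, fun _ => ⟨h1, htT, h2, h3, h4, h5, h6⟩⟩
    · exact ⟨s, s, s, s, fun hc => absurd hc h⟩
  choose dd dτ dσ dt hdd using hDD
  set Dset : Set U := {x | ∃ pq, RecCond pq ∧ x = dd pq} with hDsetdef
  set Nstar : Set U := (N \ T) ∪ ({s} ∪ Dset) with hNstardef
  have hNsu : ∀ u, u ∈ N \ T → Nested star s u := by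
    intro u hu
    by_contra hx
    exact hu.2 ⟨hu.1, hx⟩
  have hsd : ∀ pq, RecCond pq → Nested star s (dd pq) := by
    intro pq h
    obtain ⟨h1, h2, h3, h4, h5, h6, h7⟩ := hdd pq h
    rw [h6]
    rcases h5 with h5e | h5e <;> rw [h5e]
    · exact Or.inl le_sup_right
    · exact Or.inr (Or.inr (Or.inl le_sup_right))
  have hust : ∀ u, u ∈ N \ T → ∀ pq, RecCond pq → Nested star u (dd pq) := by
    intro u hu pq h
    obtain ⟨h1, h2, h3, h4, h5, h6, h7⟩ := hdd pq h
    have hus' : Nested star u s := tot_nested_symm hstar (hNsu u hu)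
    have huσ : Nested star u (dσ pq) := by
      rcases h5 with h5e | h5e <;> rw [h5e]
      · exact hus'
      · rw [tot_nested_starr hstar]
        exact hus'
    have hut : Nested star u (dt pq) := hNnest u hu.1 (dt pq) (hTN h2)
    have huτ : Nested star u (dτ pq) := by
      rcases h1 with heq | heq
      · rw [heq]; exact hut
      · rw [heq, tot_nested_starr hstar]; exact hut
    have hn' : ¬ dσ pq ≤ star (star (dτ pq)) := by
      rw [tot_ss hstar]
      intro hle2
      apply h2.2
      rcases h5 with hσe | hσe <;> rcases h1 with hτe | hτe <;> rw [hσe, hτe] at hle2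
      · exact Or.inl hle2
      · exact Or.inr (Or.inl hle2)
      · exact Or.inr (Or.inr (Or.inl hle2))
      · exact Or.inr (Or.inr (Or.inr hle2))
    rw [h6]
    exact tot_corner_nested hstar huσ ((tot_nested_starr hstar).mpr huτ) hn'
  have hdd2 : ∀ pq, RecCond pq → ∀ pq', RecCond pq' →
      Nested star (dd pq) (dd pq') := by
    intro pq h pq' h'
    obtain ⟨h1, h2, h3, h4, h5, h6, h7⟩ := hdd pq h
    obtain ⟨h1', h2', h3', h4', h5', h6', h7'⟩ := hdd pq' h'
    rw [h6, h6']
    have hσrel : dσ pq = dσ pq' ∨ dσ pq = star (dσ pq') := by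
      rcases h5 with h5e | h5e <;> rcases h5' with h5e' | h5e' <;> rw [h5e, h5e']
      · exact Or.inl rfl
      · exact Or.inr (tot_ss hstar s).symm
      · exact Or.inr rfl
      · exact Or.inl rfl
    have hnt : Nested star (dτ pq) (dτ pq') := by
      have hbase := hNnest (dt pq) (hTN h2) (dt pq') (hTN h2')
      rcases h1 with heq | heq <;> rcases h1' with heq' | heq' <;> rw [heq, heq']
      · exact hbase
      · rw [tot_nested_starr hstar]; exact hbase
      · rw [tot_nested_starl hstar]; exact hbase
      · rw [tot_nested_starl hstar, tot_nested_starr hstar]; exact hbase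
    exact tot_corner_corner hstar (tot_prof_rel hstar hPa h3 h3' hnt) hσrel
  have hNstarNest : ∀ x ∈ Nstar, ∀ y ∈ Nstar, Nested star x y := by
    intro x hx y hy
    rcases hx with hx | hx | hx <;> rcases hy with hy | hy | hy
    · exact hNnest x hx.1 y hy.1
    · rw [Set.mem_singleton_iff] at hy
      subst hy
      exact tot_nested_symm hstar (hNsu x hx)
    · obtain ⟨pq, hq, rfl⟩ := hy
      exact hust x hx pq hq
    · rw [Set.mem_singleton_iff] at hx
      subst hx
      exact hNsu y hy
    · rw [Set.mem_singleton_iff] at hx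
      rw [Set.mem_singleton_iff] at hy
      subst hx; subst hy
      exact Or.inl le_rfl
    · rw [Set.mem_singleton_iff] at hx
      subst hx
      obtain ⟨pq, hq, rfl⟩ := hy
      exact hsd pq hq
    · obtain ⟨pq, hq, rfl⟩ := hx
      exact tot_nested_symm hstar (hust y hy pq hq)
    · rw [Set.mem_singleton_iff] at hy
      subst hy
      obtain ⟨pq, hq, rfl⟩ := hx
      exact tot_nested_symm hstar (hsd pq hq)
    · obtain ⟨pq, hq, rfl⟩ := hx
      obtain ⟨pq', hq', rfl⟩ := hy
      exact hdd2 pq hq pq' hq'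
  -- coverage of Nstar
  have hCovN : ∀ pq, Dg pq → idx pq ≤ i₀ → Cov N pq → Cov Nstar pq := by
    intro pq hdg hle hcv
    by_cases hx : Cov (N \ T) pq
    · obtain ⟨t', ht', he⟩ := hx
      exact ⟨t', Or.inl ht', he⟩
    · have hq : RecCond pq := ⟨hdg, hle, hcv, hx⟩
      obtain ⟨h1, h2, h3, h4, h5, h6, h7⟩ := hdd pq hq
      exact ⟨dd pq, Or.inr (Or.inr ⟨pq, hq, rfl⟩), h7⟩
  have hCovp : Cov Nstar p := ⟨s, Or.inr (Or.inl rfl), heffs⟩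
  -- the measure increases
  have hpPF : p ∈ PF := hPfin.mem_toFinset.mpr hDgp
  have hsplit : ∀ N' : Set U, μ N' =
      (∑ pq ∈ PF.filter (fun pq => idx pq ≤ i₀), f N' pq) +
      (∑ pq ∈ PF.filter (fun pq => ¬ idx pq ≤ i₀), f N' pq) := by
    intro N'
    exact (Finset.sum_filter_add_sum_filter_not PF _ _).symm
  have hpPFle : p ∈ PF.filter (fun pq => idx pq ≤ i₀) :=
    Finset.mem_filter.mpr ⟨hpPF, le_refl _⟩
  have hle_sum :
      (∑ pq ∈ PF.filter (fun pq => idx pq ≤ i₀), f N pq) + W i₀ ≤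
      ∑ pq ∈ PF.filter (fun pq => idx pq ≤ i₀), f Nstar pq := by
    have e1 : (∑ pq ∈ PF.filter (fun pq => idx pq ≤ i₀), f N pq) =
        ∑ pq ∈ (PF.filter (fun pq => idx pq ≤ i₀)).erase p, f N pq := by
      refine (Finset.sum_erase _ ?_).symm
      simp [hfdef, hpNotCov]
    rw [e1]
    have e2 : (∑ pq ∈ PF.filter (fun pq => idx pq ≤ i₀), f Nstar pq) =
        (∑ pq ∈ (PF.filter (fun pq => idx pq ≤ i₀)).erase p, f Nstar pq) + f Nstar p :=
      (Finset.sum_erase_add _ _ hpPFle).symm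
    have e3 : f Nstar p = W i₀ := by
      simp only [hfdef]
      rw [if_pos hCovp, hi₀]
    rw [e2, e3]
    apply Nat.add_le_add
    · apply Finset.sum_le_sum
      intro pq hq
      have hq'' := Finset.mem_filter.mp (Finset.mem_of_mem_erase hq)
      have hdg : Dg pq := hPfin.mem_toFinset.mp hq''.1
      simp only [hfdef]
      by_cases hc : Cov N pq
      · rw [if_pos hc, if_pos (hCovN pq hdg hq''.2 hc)]
      · rw [if_neg hc]
        exact Nat.zero_le _
    · exact le_refl _
  have hgt_lt :
      (∑ pq ∈ PF.filter (fun pq => ¬ idx pq ≤ i₀), f N pq) < W i₀ := by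
    by_cases hc : i₀.val = n
    · have hempty : PF.filter (fun pq => ¬ idx pq ≤ i₀) = ∅ := by
        refine Finset.filter_eq_empty_iff.mpr ?_
        intro pq _
        intro hcon
        apply hcon
        rw [Fin.le_def, hc]
        exact Fin.is_le _
      rw [hempty, Finset.sum_empty]
      exact hWpos i₀
    · have hn' : i₀.val < n := lt_of_le_of_ne (Fin.is_le _) hc
      have hstep : ∀ pq ∈ PF.filter (fun pq => ¬ idx pq ≤ i₀),
          f N pq ≤ (B + 1) ^ (n - i₀.val - 1) := by
        intro pq hq
        have hq' := Finset.mem_filter.mp hq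
        have hlt : i₀ < idx pq := not_le.mp hq'.2
        have hval : i₀.val + 1 ≤ (idx pq).val := Fin.lt_def.mp hlt
        have hexp : n - (idx pq).val ≤ n - i₀.val - 1 := by omega
        have hW : W (idx pq) ≤ (B + 1) ^ (n - i₀.val - 1) :=
          Nat.pow_le_pow_right (Nat.succ_le_succ (Nat.zero_le _)) hexp
        simp only [hfdef]
        split
        · exact hW
        · exact Nat.zero_le _
      calc (∑ pq ∈ PF.filter (fun pq => ¬ idx pq ≤ i₀), f N pq)
          ≤ (PF.filter (fun pq => ¬ idx pq ≤ i₀)).card * (B + 1) ^ (n - i₀.val - 1) := by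
            have := Finset.sum_le_card_nsmul _ _ _ hstep
            simpa [smul_eq_mul] using this
        _ ≤ B * (B + 1) ^ (n - i₀.val - 1) :=
            Nat.mul_le_mul_right _ (Finset.card_filter_le _ _)
        _ < (B + 1) * (B + 1) ^ (n - i₀.val - 1) :=
            Nat.mul_lt_mul_of_pos_right (Nat.lt_succ_self B) (pow_pos (Nat.succ_pos B) _)
        _ = W i₀ := by
            show (B + 1) * (B + 1) ^ (n - i₀.val - 1) = (B + 1) ^ (n - i₀.val)
            have hee : n - i₀.val = (n - i₀.val - 1) + 1 := by omega
            conv_rhs => rw [hee]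
            rw [pow_succ, mul_comm]
  have hfinal : μ N < μ Nstar := by
    have h1 : μ N <
        (∑ pq ∈ PF.filter (fun pq => idx pq ≤ i₀), f N pq) + W i₀ := by
      rw [hsplit N]
      exact Nat.add_lt_add_left hgt_lt _
    have h2 :
        (∑ pq ∈ PF.filter (fun pq => idx pq ≤ i₀), f N pq) + W i₀ ≤
        μ Nstar := by
      rw [hsplit Nstar]
      exact le_trans hle_sum (Nat.le_add_right _ _)
    exact lt_of_lt_of_le h1 h2
  exact absurd (hNmax Nstar hNstarNest) (not_le.mpr hfinal)
end

section
/- Let 𝒮 = (S_1, …, S_n) be a compatible sequence of structurally submodular separation systems inside a universe of separations U, and 𝒫 a robust set of profiles in 𝒮. For every pair P, P' of distinguishable profiles in 𝒫 let A_{P,P'} be the set of all s ∈ S_n that distinguish P and P' efficiently. Then the family of these sets A_{P,P'} splinters. -/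
/-!
For a compatible sequence of structurally submodular separation systems and a
robust set of profiles in it, the family of sets of efficient distinguishers
of pairs of distinguishable profiles splinters.
-/

variable {U : Type*}

/-- Two separations cross if they are not nested. -/
def Crosses [Lattice U] (star : U → U) (r s : U) : Prop := ¬ Nested star r s

/-- `c` is a corner separation of `r` and `s`: a join of orientations of `r`
and `s`, or the involution of such a join. -/
def IsCornerSep [Lattice U] (star : U → U) (c r s : U) : Prop :=
  ∃ r' s', (r' = r ∨ r' = star r) ∧ (s' = s ∨ s' = star s) ∧
    (c = r' ⊔ s' ∨ c = star (r' ⊔ s'))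

/-- A family `A` of subsets of `U` splinters if for all `i`, `j` and every
crossing pair `a ∈ A i \ A j`, `b ∈ A j \ A i`, at least one corner separation
of `a` and `b` lies in `A i ∪ A j`. -/
def Splinters [Lattice U] (star : U → U) {I : Type*} (A : I → Set U) : Prop :=
  ∀ i j : I, ∀ a ∈ A i, a ∉ A j → ∀ b ∈ A j, b ∉ A i → Crosses star a b →
    ∃ c, IsCornerSep star c a b ∧ c ∈ A i ∪ A j

section SplinterAux

variable {U : Type*} [Lattice U] {star : U → U}

theorem srs_star_sup (hstar : OrderReversingInvolution star) (x y : U) :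
    star (x ⊔ y) = star x ⊓ star y := by
  apply le_antisymm
  · exact le_inf ((hstar.2 x (x ⊔ y)).mp le_sup_left) ((hstar.2 y (x ⊔ y)).mp le_sup_right)
  · have h1 : x ≤ star (star x ⊓ star y) := by
      rw [hstar.2, hstar.1]; exact inf_le_left
    have h2 : y ≤ star (star x ⊓ star y) := by
      rw [hstar.2, hstar.1]; exact inf_le_right
    have h3 := sup_le h1 h2
    rw [hstar.2, hstar.1] at h3
    exact h3

theorem srs_profile_down (hstar : OrderReversingInvolution star) {Sp P : Set U}
    (hP : IsProfile star Sp P) {c x : U} (hc : c ∈ Sp) (hx : x ∈ P) (h : c ≤ x) : c ∈ P := by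
  rcases eq_or_lt_of_le h with rfl | hlt
  · exact hx
  rcases (hP.1.2 c hc).1 with h' | h'
  · exact h'
  · exact absurd (show star (star c) < x by rw [hstar.1]; exact hlt)
      (hP.2.1 (star c) h' x hx)

theorem srs_profile_join (hstar : OrderReversingInvolution star) {Sp P : Set U}
    (hP : IsProfile star Sp P) {x y : U} (hx : x ∈ P) (hy : y ∈ P)
    (hxy : x ⊔ y ∈ Sp) : x ⊔ y ∈ P := by
  rcases (hP.1.2 _ hxy).1 with h | h
  · exact h
  · rw [srs_star_sup hstar] at h
    exact absurd h (hP.2.2 x hx y hy)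

theorem srs_dist_star (hstar : OrderReversingInvolution star) {t : U} {X Y : Set U}
    (h : Distinguishes star t X Y) : Distinguishes star (star t) X Y := by
  unfold Distinguishes at *
  rw [hstar.1]
  tauto

theorem srs_nested_of_le {a b x y : U} (hx : x = a ∨ x = star a)
    (hy : y = b ∨ y = star b) (h : x ≤ y) : Nested star a b := by
  rcases hx with rfl | rfl <;> rcases hy with rfl | rfl <;> unfold Nested <;> tauto

theorem srs_nested_reorient (hstar : OrderReversingInvolution star) {a b r s : U}
    (hr : r = a ∨ r = star a) (hs : s = b ∨ s = star b) (h : Nested star r s) :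
    Nested star a b := by
  unfold Nested at *
  rcases hr with rfl | rfl <;> rcases hs with rfl | rfl <;>
    (try simp only [hstar.1] at h) <;> tauto

theorem srs_nested_symm (hstar : OrderReversingInvolution star) {a b : U}
    (h : Nested star a b) : Nested star b a := by
  unfold Nested at *
  rcases h with h | h | h | h
  · exact Or.inr (Or.inr (Or.inr ((hstar.2 _ _).mp h)))
  · have := (hstar.2 _ _).mp h
    rw [hstar.1] at this
    exact Or.inr (Or.inl this)
  · have := (hstar.2 _ _).mp h
    rw [hstar.1] at this
    exact Or.inr (Or.inr (Or.inl this))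
  · have := (hstar.2 _ _).mp h
    rw [hstar.1, hstar.1] at this
    exact Or.inl this

theorem srs_corner_symm {a b c : U} (h : IsCornerSep star c a b) :
    IsCornerSep star c b a := by
  obtain ⟨r', s', hr, hs, hc⟩ := h
  exact ⟨s', r', hs, hr, by rwa [sup_comm s' r']⟩

theorem srs_exists_min {k : ℕ} (p : Fin (k + 1) → Prop) (h : ∃ m, p m) :
    ∃ i, p i ∧ ∀ m, p m → i ≤ m := by
  classical
  obtain ⟨m, hm⟩ := h
  obtain ⟨i, hi, hmin⟩ := Finset.exists_min_image (Finset.univ.filter p) id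
    ⟨m, by simp [hm]⟩
  refine ⟨i, by simpa using hi, fun m' hm' => ?_⟩
  simpa using hmin m' (by simp [hm'])

end SplinterAux

section SplinterMain

variable {U : Type*} [Lattice U]

theorem srs_main_aux {star : U → U} (hstar : OrderReversingInvolution star)
    {n : ℕ} {S : Fin (n + 1) → Set U}
    (hmono : ∀ i j : Fin (n + 1), i ≤ j → S i ⊆ S j)
    (hclosed : ∀ i, ∀ s ∈ S i, star s ∈ S i)
    (hcomp : Compatible star S)
    {Ps : Set (Set U)} (hprof : ∀ P ∈ Ps, ∃ i, IsProfile star (S i) P)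
    (hrobust : RobustSeq star S Ps)
    {P P' Q Q' : Set U} (hPm : P ∈ Ps) (hP'm : P' ∈ Ps) (hQm : Q ∈ Ps) (hQ'm : Q' ∈ Ps)
    {a b : U} (ha : EffDistSeq star S a P P') (hb : EffDistSeq star S b Q Q')
    (han : ¬ EffDistSeq star S a Q Q')
    {i j : Fin (n + 1)}
    (hiw : ∃ t ∈ S i, Distinguishes star t P P')
    (himin : ∀ m, (∃ t ∈ S m, Distinguishes star t P P') → i ≤ m)
    (hjw : ∃ t ∈ S j, Distinguishes star t Q Q')
    (hjmin : ∀ m, (∃ t ∈ S m, Distinguishes star t Q Q') → j ≤ m)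
    (hij : i ≤ j)
    (hcross : Crosses star a b) :
    ∃ c, IsCornerSep star c a b ∧
      (EffDistSeq star S c P P' ∨ EffDistSeq star S c Q Q') := by
  have inv := hstar.1
  have haSi : a ∈ S i := ha.2.2 i hiw
  have hbSj : b ∈ S j := hb.2.2 j hjw
  obtain ⟨r, hra, hrP, hrP'⟩ : ∃ r, (r = a ∨ r = star a) ∧ r ∈ P ∧ star r ∈ P' := by
    rcases ha.2.1 with ⟨h1, h2⟩ | ⟨h1, h2⟩
    · exact ⟨a, Or.inl rfl, h1, h2⟩
    · exact ⟨star a, Or.inr rfl, h1, by rwa [inv]⟩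
  obtain ⟨s, hsb, hsQ, hsQ'⟩ : ∃ s, (s = b ∨ s = star b) ∧ s ∈ Q ∧ star s ∈ Q' := by
    rcases hb.2.1 with ⟨h1, h2⟩ | ⟨h1, h2⟩
    · exact ⟨b, Or.inl rfl, h1, h2⟩
    · exact ⟨star b, Or.inr rfl, h1, by rwa [inv]⟩
  have hrSi : r ∈ S i := by
    rcases hra with rfl | rfl
    · exact haSi
    · exact hclosed i a haSi
  have hsSj : s ∈ S j := by
    rcases hsb with rfl | rfl
    · exact hbSj
    · exact hclosed j b hbSj
  obtain ⟨p, hP⟩ := hprof P hPm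
  obtain ⟨p', hP'⟩ := hprof P' hP'm
  obtain ⟨q, hQ⟩ := hprof Q hQm
  obtain ⟨q', hQ'⟩ := hprof Q' hQ'm
  have hdr : Distinguishes star r P P' := Or.inl ⟨hrP, hrP'⟩
  have hds : Distinguishes star s Q Q' := Or.inl ⟨hsQ, hsQ'⟩
  have hip : i ≤ p := himin p ⟨r, hP.1.1 hrP, hdr⟩
  have hip' : i ≤ p' := himin p' ⟨star r, hP'.1.1 hrP', srs_dist_star hstar hdr⟩
  have hjq : j ≤ q := hjmin q ⟨s, hQ.1.1 hsQ, hds⟩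
  have hjq' : j ≤ q' := hjmin q' ⟨star s, hQ'.1.1 hsQ', srs_dist_star hstar hds⟩
  have hnn : ¬ Nested star r s := fun h => hcross (srs_nested_reorient hstar hra hsb h)
  -- orientation transfer helpers
  have hora : ∀ x, (x = r ∨ x = star r) → (x = a ∨ x = star a) := by
    rintro x (rfl | rfl)
    · exact hra
    · rcases hra with rfl | rfl
      · exact Or.inr rfl
      · exact Or.inl (inv a)
  have horb : ∀ y, (y = s ∨ y = star s) → (y = b ∨ y = star b) := by
    rintro y (rfl | rfl)
    · exact hsb
    · rcases hsb with rfl | rfl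
      · exact Or.inr rfl
      · exact Or.inl (inv b)
  -- s is an efficient Q,Q'-distinguisher
  have hseff : EffDistSeq star S s Q Q' := by
    rcases hsb with rfl | rfl
    · exact hb
    · exact ⟨hclosed _ b hb.1, srs_dist_star hstar hb.2.1,
        fun m hm => hclosed m b (hb.2.2 m hm)⟩
  -- Q and Q' agree on r
  have hnd : ¬ Distinguishes star r Q Q' := by
    intro hd
    apply han
    have hda : Distinguishes star a Q Q' := by
      rcases hra with rfl | rfl
      · exact hd
      · have := srs_dist_star hstar hd
        rwa [inv] at this
    exact ⟨ha.1, hda, fun m hm => hmono i m (le_trans hij (hjmin m hm)) haSi⟩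
  obtain ⟨ρ, hρ, hρQ, hρQ'⟩ : ∃ ρ, (ρ = r ∨ ρ = star r) ∧ ρ ∈ Q ∧ ρ ∈ Q' := by
    rcases (hQ.1.2 r (hmono i q (le_trans hij hjq) hrSi)).1 with h1 | h1 <;>
      rcases (hQ'.1.2 r (hmono i q' (le_trans hij hjq') hrSi)).1 with h2 | h2
    · exact ⟨r, Or.inl rfl, h1, h2⟩
    · exact absurd (Or.inl ⟨h1, h2⟩) hnd
    · exact absurd (Or.inr ⟨h1, h2⟩) hnd
    · exact ⟨star r, Or.inr rfl, h1, h2⟩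
  -- Key finisher K : a corner on ρ's side lying in S j distinguishes Q,Q' efficiently
  have K : ∀ y, (y = s ∨ y = star s) → ρ ⊔ y ∈ S j →
      ∃ c, IsCornerSep star c a b ∧
        (EffDistSeq star S c P P' ∨ EffDistSeq star S c Q Q') := by
    intro y hy hcj
    have hcq : ρ ⊔ y ∈ S q := hmono j q hjq hcj
    have hcq' : ρ ⊔ y ∈ S q' := hmono j q' hjq' hcj
    have hdist : Distinguishes star (ρ ⊔ y) Q Q' := by
      rcases hy with h | h
      · have hcQ : ρ ⊔ y ∈ Q :=
          srs_profile_join hstar hQ hρQ (by rw [h]; exact hsQ) hcq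
        have hcQ' : star (ρ ⊔ y) ∈ Q' := by
          apply srs_profile_down hstar hQ' (hclosed q' _ hcq')
            (show star y ∈ Q' by rw [h]; exact hsQ')
          rw [srs_star_sup hstar]
          exact inf_le_right
        exact Or.inl ⟨hcQ, hcQ'⟩
      · have hcQ' : ρ ⊔ y ∈ Q' :=
          srs_profile_join hstar hQ' hρQ' (by rw [h]; exact hsQ') hcq'
        have hcQ : star (ρ ⊔ y) ∈ Q := by
          apply srs_profile_down hstar hQ (hclosed q _ hcq) hsQ
          rw [srs_star_sup hstar, h, inv]
          exact inf_le_right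
        exact Or.inr ⟨hcQ, hcQ'⟩
    exact ⟨ρ ⊔ y, ⟨ρ, y, hora ρ hρ, horb y hy, Or.inl rfl⟩,
      Or.inr ⟨hmono j _ (Fin.le_last j) hcj, hdist, fun m hm => hmono j m (hjmin m hm) hcj⟩⟩
  -- Robustness finisher RB : both corners on star ρ's side lie in S i
  have RB : star ρ ⊔ s ∈ S i → star ρ ⊔ star s ∈ S i →
      ∃ c, IsCornerSep star c a b ∧
        (EffDistSeq star S c P P' ∨ EffDistSeq star S c Q Q') := by
    intro hd1 hd2
    have hρ' : star ρ = r ∨ star ρ = star r := by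
      rcases hρ with rfl | rfl
      · exact Or.inr rfl
      · exact Or.inl (inv r)
    have hstep : ∀ y, (y = s ∨ y = star s) → star ρ ⊔ y ∈ S i →
        (∃ c, IsCornerSep star c a b ∧
          (EffDistSeq star S c P P' ∨ EffDistSeq star S c Q Q')) ∨
        (star (star ρ ⊔ y) ∈ P ∧ star (star ρ ⊔ y) ∈ P') := by
      intro y hy hdSi
      by_cases hdd : Distinguishes star (star ρ ⊔ y) P P'
      · exact Or.inl ⟨star ρ ⊔ y, ⟨star ρ, y, hora _ hρ', horb y hy, Or.inl rfl⟩,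
          Or.inl ⟨hmono i _ (Fin.le_last i) hdSi, hdd,
            fun m hm => hmono i m (himin m hm) hdSi⟩⟩
      · right
        have hdp : star ρ ⊔ y ∈ S p := hmono i p hip hdSi
        have hdp' : star ρ ⊔ y ∈ S p' := hmono i p' hip' hdSi
        have hstard : star (star ρ ⊔ y) ≤ ρ := by
          rw [srs_star_sup hstar, inv]
          exact inf_le_left
        rcases hρ with h | h
        · have h1 : star (star ρ ⊔ y) ∈ P := by
            apply srs_profile_down hstar hP (hclosed p _ hdp) _ hstard
            rw [h]; exact hrP
          rcases (hP'.1.2 _ hdp').1 with h2 | h2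
          · exact absurd (Or.inr ⟨h1, h2⟩) hdd
          · exact ⟨h1, h2⟩
        · have h2 : star (star ρ ⊔ y) ∈ P' := by
            apply srs_profile_down hstar hP' (hclosed p' _ hdp') _ hstard
            rw [h]; exact hrP'
          rcases (hP.1.2 _ hdp).1 with h1 | h1
          · exact absurd (Or.inl ⟨h1, h2⟩) hdd
          · exact ⟨h1, h2⟩
    rcases hstep s (Or.inl rfl) hd1 with done | ⟨h1P, h1P'⟩
    · exact done
    rcases hstep (star s) (Or.inr rfl) hd2 with done | ⟨h2P, h2P'⟩
    · exact done
    obtain ⟨X, px, hXm, hXprof, hρX, hX1, hX2⟩ :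
        ∃ X px, X ∈ Ps ∧ IsProfile star (S px) X ∧ star ρ ∈ X ∧
          star (star ρ ⊔ s) ∈ X ∧ star (star ρ ⊔ star s) ∈ X := by
      rcases hρ with rfl | rfl
      · exact ⟨P', p', hP'm, hP', hrP', h1P', h2P'⟩
      · exact ⟨P, p, hPm, hP, by rw [inv]; exact hrP, h1P, h2P⟩
    obtain ⟨s', hs', hcon⟩ := hrobust X hXm Q hQm Q' hQ'm ρ hρQ hρQ' hρX j s hsSj hseff
    rcases hcon with hdX | hcj
    · exfalso
      have hXd : star (star ρ ⊔ s') ∈ X := by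
        rcases hs' with rfl | rfl
        · exact hX1
        · exact hX2
      have hmemS : star ρ ⊔ s' ∈ S px := hXprof.1.1 hdX
      have heq := (hXprof.1.2 _ hmemS).2 hdX hXd
      have hle : star ρ ≤ star s' := by
        calc star ρ ≤ star ρ ⊔ s' := le_sup_left
          _ = star (star ρ ⊔ s') := heq
          _ = ρ ⊓ star s' := by rw [srs_star_sup hstar, inv]
          _ ≤ star s' := inf_le_right
      have hs'or : star s' = s ∨ star s' = star s := by
        rcases hs' with rfl | rfl
        · exact Or.inr rfl
        · exact Or.inl (inv s)
      exact hnn (srs_nested_of_le hρ' hs'or hle)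
    · exact K s' hs' hcj
  -- main case analysis via compatibility
  rcases hcomp i j hij r hrSi s hsSj with ⟨k₁, k₂, hk, hk1, hk2⟩ |
    ⟨k₁, k₂, k₃, h12, h13, h23, hk1, hk2, hk3⟩
  · -- two corners of r,s in S i
    rcases hρ with hρr | hρr
    · -- ρ = r
      have hdec : k₁ = 0 ∨ k₁ = 1 ∨ k₂ = 0 ∨ k₂ = 1 ∨
          (k₁ = 2 ∧ k₂ = 3) ∨ (k₁ = 3 ∧ k₂ = 2) := by
        have : ∀ x y : Fin 4, x ≠ y → (x = 0 ∨ x = 1 ∨ y = 0 ∨ y = 1 ∨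
            (x = 2 ∧ y = 3) ∨ (x = 3 ∧ y = 2)) := by decide
        exact this k₁ k₂ hk
      have e0 : corners star r s 0 = r ⊔ s := rfl
      have e1 : corners star r s 1 = r ⊔ star s := rfl
      have e2 : corners star r s 2 = star r ⊔ s := rfl
      have e3 : corners star r s 3 = star r ⊔ star s := rfl
      rcases hdec with rfl | rfl | rfl | rfl | ⟨rfl, rfl⟩ | ⟨rfl, rfl⟩
      · rw [e0] at hk1
        exact K s (Or.inl rfl) (by rw [hρr]; exact hmono i j hij hk1)
      · rw [e1] at hk1
        exact K (star s) (Or.inr rfl) (by rw [hρr]; exact hmono i j hij hk1)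
      · rw [e0] at hk2
        exact K s (Or.inl rfl) (by rw [hρr]; exact hmono i j hij hk2)
      · rw [e1] at hk2
        exact K (star s) (Or.inr rfl) (by rw [hρr]; exact hmono i j hij hk2)
      · rw [e2] at hk1; rw [e3] at hk2
        exact RB (by rw [hρr]; exact hk1) (by rw [hρr]; exact hk2)
      · rw [e3] at hk1; rw [e2] at hk2
        exact RB (by rw [hρr]; exact hk2) (by rw [hρr]; exact hk1)
    · -- ρ = star r
      have hdec : k₁ = 2 ∨ k₁ = 3 ∨ k₂ = 2 ∨ k₂ = 3 ∨
          (k₁ = 0 ∧ k₂ = 1) ∨ (k₁ = 1 ∧ k₂ = 0) := by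
        have : ∀ x y : Fin 4, x ≠ y → (x = 2 ∨ x = 3 ∨ y = 2 ∨ y = 3 ∨
            (x = 0 ∧ y = 1) ∨ (x = 1 ∧ y = 0)) := by decide
        exact this k₁ k₂ hk
      have e0 : corners star r s 0 = r ⊔ s := rfl
      have e1 : corners star r s 1 = r ⊔ star s := rfl
      have e2 : corners star r s 2 = star r ⊔ s := rfl
      have e3 : corners star r s 3 = star r ⊔ star s := rfl
      rcases hdec with rfl | rfl | rfl | rfl | ⟨rfl, rfl⟩ | ⟨rfl, rfl⟩
      · rw [e2] at hk1
        exact K s (Or.inl rfl) (by rw [hρr]; exact hmono i j hij hk1)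
      · rw [e3] at hk1
        exact K (star s) (Or.inr rfl) (by rw [hρr]; exact hmono i j hij hk1)
      · rw [e2] at hk2
        exact K s (Or.inl rfl) (by rw [hρr]; exact hmono i j hij hk2)
      · rw [e3] at hk2
        exact K (star s) (Or.inr rfl) (by rw [hρr]; exact hmono i j hij hk2)
      · rw [e0] at hk1; rw [e1] at hk2
        exact RB (by rw [hρr, inv]; exact hk1) (by rw [hρr, inv]; exact hk2)
      · rw [e1] at hk1; rw [e0] at hk2
        exact RB (by rw [hρr, inv]; exact hk2) (by rw [hρr, inv]; exact hk1)
  · -- three corners of r,s in S j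
    have e0 : corners star r s 0 = r ⊔ s := rfl
    have e1 : corners star r s 1 = r ⊔ star s := rfl
    have e2 : corners star r s 2 = star r ⊔ s := rfl
    have e3 : corners star r s 3 = star r ⊔ star s := rfl
    rcases hρ with hρr | hρr
    · -- ρ = r : find a corner with index 0 or 1 in S j
      have hdec : k₁ = 0 ∨ k₁ = 1 ∨ k₂ = 0 ∨ k₂ = 1 ∨ k₃ = 0 ∨ k₃ = 1 := by
        have : ∀ x y z : Fin 4, x ≠ y → x ≠ z → y ≠ z →
            (x = 0 ∨ x = 1 ∨ y = 0 ∨ y = 1 ∨ z = 0 ∨ z = 1) := by decide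
        exact this k₁ k₂ k₃ h12 h13 h23
      rcases hdec with rfl | rfl | rfl | rfl | rfl | rfl
      · rw [e0] at hk1; exact K s (Or.inl rfl) (by rw [hρr]; exact hk1)
      · rw [e1] at hk1; exact K (star s) (Or.inr rfl) (by rw [hρr]; exact hk1)
      · rw [e0] at hk2; exact K s (Or.inl rfl) (by rw [hρr]; exact hk2)
      · rw [e1] at hk2; exact K (star s) (Or.inr rfl) (by rw [hρr]; exact hk2)
      · rw [e0] at hk3; exact K s (Or.inl rfl) (by rw [hρr]; exact hk3)
      · rw [e1] at hk3; exact K (star s) (Or.inr rfl) (by rw [hρr]; exact hk3)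
    · -- ρ = star r : find a corner with index 2 or 3 in S j
      have hdec : k₁ = 2 ∨ k₁ = 3 ∨ k₂ = 2 ∨ k₂ = 3 ∨ k₃ = 2 ∨ k₃ = 3 := by
        have : ∀ x y z : Fin 4, x ≠ y → x ≠ z → y ≠ z →
            (x = 2 ∨ x = 3 ∨ y = 2 ∨ y = 3 ∨ z = 2 ∨ z = 3) := by decide
        exact this k₁ k₂ k₃ h12 h13 h23
      rcases hdec with rfl | rfl | rfl | rfl | rfl | rfl
      · rw [e2] at hk1; exact K s (Or.inl rfl) (by rw [hρr]; exact hk1)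
      · rw [e3] at hk1; exact K (star s) (Or.inr rfl) (by rw [hρr]; exact hk1)
      · rw [e2] at hk2; exact K s (Or.inl rfl) (by rw [hρr]; exact hk2)
      · rw [e3] at hk2; exact K (star s) (Or.inr rfl) (by rw [hρr]; exact hk2)
      · rw [e2] at hk3; exact K s (Or.inl rfl) (by rw [hρr]; exact hk3)
      · rw [e3] at hk3; exact K (star s) (Or.inr rfl) (by rw [hρr]; exact hk3)

end SplinterMain

/-- For a compatible sequence `S` of structurally submodular separation
systems and a robust set `Ps` of profiles in `S`, the family of the sets
`A_{P,P'}` of separations in the top system `S (Fin.last n)` distinguishing a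
pair of distinguishable profiles of `Ps` efficiently splinters. -/
theorem sequence_efficient_distinguishers_splinter [Lattice U] [Fintype U]
    (star : U → U) (hstar : OrderReversingInvolution star)
    {n : ℕ} (S : Fin (n + 1) → Set U)
    (hmono : ∀ i j : Fin (n + 1), i ≤ j → S i ⊆ S j)
    (hclosed : ∀ i, ∀ s ∈ S i, star s ∈ S i)
    (hsub : ∀ i, StructSubmodular (S i))
    (hcomp : Compatible star S)
    (Ps : Set (Set U)) (hprof : ∀ P ∈ Ps, ∃ i, IsProfile star (S i) P)
    (hrobust : RobustSeq star S Ps) :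
    Splinters star
      (fun pp : {pp : Set U × Set U // pp.1 ∈ Ps ∧ pp.2 ∈ Ps ∧
          ∃ s ∈ S (Fin.last n), Distinguishes star s pp.1 pp.2} =>
        {s | EffDistSeq star S s pp.1.1 pp.1.2}) := by
  intro pp1 pp2 a ha hanQ b hb hbnP hcross
  have hPm : pp1.1.1 ∈ Ps := pp1.2.1
  have hP'm : pp1.1.2 ∈ Ps := pp1.2.2.1
  have hQm : pp2.1.1 ∈ Ps := pp2.2.1
  have hQ'm : pp2.1.2 ∈ Ps := pp2.2.2.1
  have ha' : EffDistSeq star S a pp1.1.1 pp1.1.2 := ha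
  have hb' : EffDistSeq star S b pp2.1.1 pp2.1.2 := hb
  have hanQ' : ¬ EffDistSeq star S a pp2.1.1 pp2.1.2 := fun h => hanQ h
  have hbnP' : ¬ EffDistSeq star S b pp1.1.1 pp1.1.2 := fun h => hbnP h
  obtain ⟨i, hiw, himin⟩ := srs_exists_min
    (fun m => ∃ t ∈ S m, Distinguishes star t pp1.1.1 pp1.1.2)
    ⟨Fin.last n, a, ha'.1, ha'.2.1⟩
  obtain ⟨j, hjw, hjmin⟩ := srs_exists_min
    (fun m => ∃ t ∈ S m, Distinguishes star t pp2.1.1 pp2.1.2)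
    ⟨Fin.last n, b, hb'.1, hb'.2.1⟩
  rcases le_total i j with hij | hij
  · obtain ⟨c, hc, hloc⟩ := srs_main_aux hstar hmono hclosed hcomp hprof hrobust
      hPm hP'm hQm hQ'm ha' hb' hanQ' hiw himin hjw hjmin hij hcross
    refine ⟨c, hc, ?_⟩
    rcases hloc with h | h
    · exact Set.mem_union_left _ h
    · exact Set.mem_union_right _ h
  · have hcross' : Crosses star b a := fun h => hcross (srs_nested_symm hstar h)
    obtain ⟨c, hc, hloc⟩ := srs_main_aux hstar hmono hclosed hcomp hprof hrobust
      hQm hQ'm hPm hP'm hb' ha' hbnP' hjw hjmin hiw himin hij hcross'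
    refine ⟨c, srs_corner_symm hc, ?_⟩
    rcases hloc with h | h
    · exact Set.mem_union_right _ h
    · exact Set.mem_union_left _ h
end

section
/- Let r and s be two crossing clique separations of a finite graph G with |r| ≤ |s|. Then there are orientations r⃗ = (A,B) of r and s⃗ = (C,D) of s such that the corner separations r⃖ ∧ s⃖ = (B ∩ D, A ∪ C), r⃖ ∧ s⃗ = (B ∩ C, A ∪ D) and r⃗ ∧ s⃖ = (A ∩ D, B ∪ C) are clique separations with |r⃖ ∧ s⃖| ≤ |r|, |r⃖ ∧ s⃗| ≤ |r| and |r⃗ ∧ s⃖| ≤ |s|. Moreover, if |r⃖ ∧ s⃖| = |r| = |s|, then r⃗ ∧ s⃗ = (A ∩ C, B ∪ D) is also a clique separation with |r⃗ ∧ s⃗| ≤ |r|. -/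
/-!
Corner separations of crossing clique separations: if `r`, `s` are crossing
clique separations with `|r| ≤ |s|`, there are orientations `r' = (A,B)`,
`s' = (C,D)` with `r'* ∧ s'*`, `r'* ∧ s'` and `r' ∧ s'*` clique separations of
order at most `|r|`, `|r|` and `|s|` respectively; and if moreover
`|r'* ∧ s'*| = |r| = |s|`, then `r' ∧ s'` is also a clique separation of order
at most `|r|`.
-/

variable {V : Type*} [Fintype V] [DecidableEq V]

/-- An oriented separation-candidate of a graph on `V`: a pair of vertex sets. -/
abbrev GSep (V : Type*) := Finset V × Finset V

/-- The involution `(A,B) ↦ (B,A)`. -/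
def sepInv (p : GSep V) : GSep V := (p.2, p.1)

/-- The partial order `(A,B) ≤ (C,D)` iff `A ⊆ C` and `B ⊇ D`. -/
def sepLE (p q : GSep V) : Prop := p.1 ⊆ q.1 ∧ q.2 ⊆ p.2

/-- Strict version of `sepLE`. -/
def sepLT (p q : GSep V) : Prop := sepLE p q ∧ p ≠ q

/-- The join `(A,B) ∨ (C,D) = (A ∪ C, B ∩ D)`. -/
def sepJoin (p q : GSep V) : GSep V := (p.1 ∪ q.1, p.2 ∩ q.2)

/-- The meet `(A,B) ∧ (C,D) = (A ∩ C, B ∪ D)`. -/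
def sepMeet (p q : GSep V) : GSep V := (p.1 ∩ q.1, p.2 ∪ q.2)

/-- The order `|(A,B)| = |A ∩ B|`. -/
def sepOrder (p : GSep V) : ℕ := (p.1 ∩ p.2).card

/-- `(A,B)` is a separation of `G`: `A ∪ B = V` and `G` has no edge between
`A \ B` and `B \ A`. -/
def IsSep (G : SimpleGraph V) (p : GSep V) : Prop :=
  p.1 ∪ p.2 = Finset.univ ∧
    ∀ a b : V, G.Adj a b → a ∈ p.1 → a ∉ p.2 → b ∈ p.2 → b ∉ p.1 → False

/-- Two separations are nested if they have `sepLE`-comparable orientations. -/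
def sepNested (p q : GSep V) : Prop :=
  sepLE p q ∨ sepLE p (sepInv q) ∨ sepLE (sepInv p) q ∨ sepLE (sepInv p) (sepInv q)

/-- `c` is a corner separation of `p` and `q`: a join of orientations of `p`
and `q`, or the involution of such a join. -/
def sepIsCorner (c p q : GSep V) : Prop :=
  ∃ p' q', (p' = p ∨ p' = sepInv p) ∧ (q' = q ∨ q' = sepInv q) ∧
    (c = sepJoin p' q' ∨ c = sepInv (sepJoin p' q'))

/-- `(A,B)` is a clique separation of `G`: a separation whose separator
`A ∩ B` induces a complete subgraph. -/
def IsCliqueSep (G : SimpleGraph V) (p : GSep V) : Prop :=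
  IsSep G p ∧ G.IsClique ↑(p.1 ∩ p.2)

lemma sepInv_isSep {G : SimpleGraph V} {p : GSep V} (h : IsSep G p) : IsSep G (sepInv p) := by
  obtain ⟨hu, hadj⟩ := h
  refine ⟨by rw [sepInv]; rw [Finset.union_comm] at hu; exact hu, ?_⟩
  intro a b hab ha1 ha2 hb1 hb2
  exact hadj b a hab.symm hb1 hb2 ha1 ha2

lemma sepInv_sep (p : GSep V) : (sepInv p).1 ∩ (sepInv p).2 = p.1 ∩ p.2 :=
  Finset.inter_comm _ _

lemma sepInv_isCliqueSep {G : SimpleGraph V} {p : GSep V} (h : IsCliqueSep G p) :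
    IsCliqueSep G (sepInv p) := by
  refine ⟨sepInv_isSep h.1, ?_⟩
  rw [sepInv_sep]; exact h.2

lemma sepOrder_sepInv (p : GSep V) : sepOrder (sepInv p) = sepOrder p := by
  simp [sepOrder, sepInv, Finset.inter_comm]

lemma isSep_meet {G : SimpleGraph V} {p q : GSep V} (hp : IsSep G p) (hq : IsSep G q) :
    IsSep G (sepMeet p q) := by
  obtain ⟨hpu, hpa⟩ := hp
  obtain ⟨hqu, hqa⟩ := hq
  constructor
  · apply Finset.eq_univ_iff_forall.2
    intro v
    simp only [sepMeet, Finset.mem_union, Finset.mem_inter]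
    by_cases h1 : v ∈ p.2
    · tauto
    by_cases h2 : v ∈ q.2
    · tauto
    have hv1 : v ∈ p.1 := by
      have := Finset.eq_univ_iff_forall.1 hpu v
      rw [Finset.mem_union] at this; tauto
    have hv2 : v ∈ q.1 := by
      have := Finset.eq_univ_iff_forall.1 hqu v
      rw [Finset.mem_union] at this; tauto
    tauto
  · intro a b hab ha1 ha2 hb1 hb2
    simp only [sepMeet, Finset.mem_union, Finset.mem_inter] at ha1 ha2 hb1 hb2
    push_neg at ha2 hb2
    rcases hb1 with hb | hb
    · by_cases hbp : b ∈ p.1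
      · have hbq1 : b ∉ q.1 := fun h => hb2 hbp h
        have hbq2 : b ∈ q.2 := by
          have := Finset.eq_univ_iff_forall.1 hqu b
          rw [Finset.mem_union] at this; tauto
        exact hqa a b hab ha1.2 ha2.2 hbq2 hbq1
      · exact hpa a b hab ha1.1 ha2.1 hb hbp
    · by_cases hbq : b ∈ q.1
      · have hbp1 : b ∉ p.1 := fun h => hb2 h hbq
        have hbp2 : b ∈ p.2 := by
          have := Finset.eq_univ_iff_forall.1 hpu b
          rw [Finset.mem_union] at this; tauto
        exact hpa a b hab ha1.1 ha2.1 hbp2 hbp1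
      · exact hqa a b hab ha1.2 ha2.2 hb hbq

lemma clique_subset_side {G : SimpleGraph V} {p : GSep V} (hp : IsSep G p)
    {S : Finset V} (hS : G.IsClique ↑S) : S ⊆ p.1 ∨ S ⊆ p.2 := by
  by_contra h
  push_neg at h
  obtain ⟨h1, h2⟩ := h
  obtain ⟨x, hxS, hx1⟩ := Finset.not_subset.1 h1
  obtain ⟨y, hyS, hy2⟩ := Finset.not_subset.1 h2
  have hx2 : x ∈ p.2 := by
    have := Finset.eq_univ_iff_forall.1 hp.1 x
    rw [Finset.mem_union] at this; tauto
  have hy1 : y ∈ p.1 := by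
    have := Finset.eq_univ_iff_forall.1 hp.1 y
    rw [Finset.mem_union] at this; tauto
  have hne : y ≠ x := fun h => hx1 (h ▸ hy1)
  exact hp.2 y x (hS (Finset.mem_coe.2 hyS) (Finset.mem_coe.2 hxS) hne) hy1 hy2 hx2 hx1

lemma clique_sep_core {G : SimpleGraph V} {r s : GSep V}
    (hr : IsCliqueSep G r) (hs : IsCliqueSep G s)
    (hY : s.1 ∩ s.2 ⊆ r.1) (hX : r.1 ∩ r.2 ⊆ s.1) :
    (IsCliqueSep G (sepMeet (sepInv r) (sepInv s)) ∧
        sepOrder (sepMeet (sepInv r) (sepInv s)) ≤ sepOrder r) ∧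
      (IsCliqueSep G (sepMeet (sepInv r) s) ∧
        sepOrder (sepMeet (sepInv r) s) ≤ sepOrder r) ∧
      (IsCliqueSep G (sepMeet r (sepInv s)) ∧
        sepOrder (sepMeet r (sepInv s)) ≤ sepOrder s) ∧
      (sepOrder (sepMeet (sepInv r) (sepInv s)) = sepOrder r →
        sepOrder r = sepOrder s →
        IsCliqueSep G (sepMeet r s) ∧
          sepOrder (sepMeet r s) ≤ sepOrder r) := by
  have hX' : ∀ v, v ∈ r.1 → v ∈ r.2 → v ∈ s.1 := fun v h1 h2 =>
    hX (Finset.mem_inter.2 ⟨h1, h2⟩)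
  have hY' : ∀ v, v ∈ s.1 → v ∈ s.2 → v ∈ r.1 := fun v h1 h2 =>
    hY (Finset.mem_inter.2 ⟨h1, h2⟩)
  have e1 : (sepMeet (sepInv r) (sepInv s)).1 ∩ (sepMeet (sepInv r) (sepInv s)).2
      = (r.1 ∩ r.2) ∩ (s.1 ∩ s.2) := by
    ext v
    simp only [sepMeet, sepInv, Finset.mem_inter, Finset.mem_union]
    specialize hX' v; specialize hY' v; tauto
  have e2 : (sepMeet (sepInv r) s).1 ∩ (sepMeet (sepInv r) s).2 = r.1 ∩ r.2 := by
    ext v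
    simp only [sepMeet, sepInv, Finset.mem_inter, Finset.mem_union]
    specialize hX' v; specialize hY' v; tauto
  have e3 : (sepMeet r (sepInv s)).1 ∩ (sepMeet r (sepInv s)).2 = s.1 ∩ s.2 := by
    ext v
    simp only [sepMeet, sepInv, Finset.mem_inter, Finset.mem_union]
    specialize hX' v; specialize hY' v; tauto
  have e4 : (sepMeet r s).1 ∩ (sepMeet r s).2 = (r.1 ∩ r.2) ∪ (s.1 ∩ s.2) := by
    ext v
    simp only [sepMeet, sepInv, Finset.mem_inter, Finset.mem_union]
    specialize hX' v; specialize hY' v; tauto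
  have hsep1 : IsSep G (sepMeet (sepInv r) (sepInv s)) :=
    isSep_meet (sepInv_isSep hr.1) (sepInv_isSep hs.1)
  have hsep2 : IsSep G (sepMeet (sepInv r) s) := isSep_meet (sepInv_isSep hr.1) hs.1
  have hsep3 : IsSep G (sepMeet r (sepInv s)) := isSep_meet hr.1 (sepInv_isSep hs.1)
  have hsep4 : IsSep G (sepMeet r s) := isSep_meet hr.1 hs.1
  refine ⟨⟨⟨hsep1, ?_⟩, ?_⟩, ⟨⟨hsep2, ?_⟩, ?_⟩, ⟨⟨hsep3, ?_⟩, ?_⟩, ?_⟩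
  · rw [e1]
    exact hr.2.subset (Finset.coe_subset.2 Finset.inter_subset_left)
  · rw [sepOrder, e1, sepOrder]
    exact Finset.card_le_card Finset.inter_subset_left
  · rw [e2]; exact hr.2
  · rw [sepOrder, e2, sepOrder]
  · rw [e3]; exact hs.2
  · rw [sepOrder, e3, sepOrder]
  · intro h1 h2
    rw [sepOrder, e1, sepOrder] at h1
    have hXY : (r.1 ∩ r.2) ∩ (s.1 ∩ s.2) = r.1 ∩ r.2 :=
      Finset.eq_of_subset_of_card_le Finset.inter_subset_left (le_of_eq h1.symm)
    have hXsubY : r.1 ∩ r.2 ⊆ s.1 ∩ s.2 := by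
      rw [← hXY]; exact Finset.inter_subset_right
    have hYX : r.1 ∩ r.2 = s.1 ∩ s.2 := by
      apply Finset.eq_of_subset_of_card_le hXsubY
      rw [sepOrder, sepOrder] at h2
      exact le_of_eq h2.symm
    have e4' : (sepMeet r s).1 ∩ (sepMeet r s).2 = r.1 ∩ r.2 := by
      rw [e4, hYX, Finset.union_self]
    constructor
    · refine ⟨hsep4, ?_⟩
      rw [e4']; exact hr.2
    · rw [sepOrder, e4', sepOrder]

/-- **Corner separations of crossing clique separations.** -/
theorem clique_sep_corners (G : SimpleGraph V) (r s : GSep V)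
    (hr : IsCliqueSep G r) (hs : IsCliqueSep G s)
    (hcross : ¬ sepNested r s) (hord : sepOrder r ≤ sepOrder s) :
    ∃ r' s' : GSep V, (r' = r ∨ r' = sepInv r) ∧ (s' = s ∨ s' = sepInv s) ∧
      (IsCliqueSep G (sepMeet (sepInv r') (sepInv s')) ∧
        sepOrder (sepMeet (sepInv r') (sepInv s')) ≤ sepOrder r) ∧
      (IsCliqueSep G (sepMeet (sepInv r') s') ∧
        sepOrder (sepMeet (sepInv r') s') ≤ sepOrder r) ∧
      (IsCliqueSep G (sepMeet r' (sepInv s')) ∧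
        sepOrder (sepMeet r' (sepInv s')) ≤ sepOrder s) ∧
      (sepOrder (sepMeet (sepInv r') (sepInv s')) = sepOrder r →
        sepOrder r = sepOrder s →
        IsCliqueSep G (sepMeet r' s') ∧
          sepOrder (sepMeet r' s') ≤ sepOrder r) := by
  -- choose an orientation r₀ of r whose first side contains s's separator
  obtain ⟨r₀, hr₀eq, hr₀ : IsCliqueSep G r₀, hr₀ord, hY₀ : s.1 ∩ s.2 ⊆ r₀.1⟩ :
      ∃ r₀, (r₀ = r ∨ r₀ = sepInv r) ∧ IsCliqueSep G r₀ ∧ sepOrder r₀ = sepOrder r ∧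
        s.1 ∩ s.2 ⊆ r₀.1 := by
    rcases clique_subset_side hr.1 hs.2 with h | h
    · exact ⟨r, Or.inl rfl, hr, rfl, h⟩
    · exact ⟨sepInv r, Or.inr rfl, sepInv_isCliqueSep hr, sepOrder_sepInv r, h⟩
  -- choose an orientation s₀ of s whose first side contains r₀'s separator
  obtain ⟨s₀, hs₀eq, hs₀ : IsCliqueSep G s₀, hs₀ord, hY₁, hX₀⟩ :
      ∃ s₀, (s₀ = s ∨ s₀ = sepInv s) ∧ IsCliqueSep G s₀ ∧ sepOrder s₀ = sepOrder s ∧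
        s₀.1 ∩ s₀.2 ⊆ r₀.1 ∧ r₀.1 ∩ r₀.2 ⊆ s₀.1 := by
    rcases clique_subset_side hs.1 hr₀.2 with h | h
    · exact ⟨s, Or.inl rfl, hs, rfl, hY₀, h⟩
    · refine ⟨sepInv s, Or.inr rfl, sepInv_isCliqueSep hs, sepOrder_sepInv s, ?_, h⟩
      rw [sepInv_sep]; exact hY₀
  have key := clique_sep_core hr₀ hs₀ hY₁ hX₀
  rw [hr₀ord, hs₀ord] at key
  exact ⟨r₀, s₀, hr₀eq, hs₀eq, key.1, key.2.1, key.2.2.1, key.2.2.2⟩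
end

section
/- Let G be a finite graph and k an integer. Then the set S_k of all clique separations of G of order < k is structurally submodular: for any two oriented clique separations r⃗, s⃗ of order < k, at least one of r⃗ ∨ s⃗ and r⃗ ∧ s⃗ is again a clique separation of order < k. -/
/-!
The set of clique separations of order `< k` of a finite graph is structurally
submodular: for any two oriented clique separations of order `< k`, at least
one of their join and meet is again a clique separation of order `< k`.
-/

variable {V : Type*} [Fintype V] [DecidableEq V]

/-- **The clique separations of order `< k` form a structurally submodular
separation system.** -/
theorem clique_seps_structurally_submodular (G : SimpleGraph V) (k : ℕ)
    (r s : GSep V) (hr : IsCliqueSep G r) (hs : IsCliqueSep G s)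
    (hrk : sepOrder r < k) (hsk : sepOrder s < k) :
    (IsCliqueSep G (sepJoin r s) ∧ sepOrder (sepJoin r s) < k) ∨
    (IsCliqueSep G (sepMeet r s) ∧ sepOrder (sepMeet r s) < k) := by
  obtain ⟨⟨hrU, hrE⟩, hrC⟩ := hr
  obtain ⟨⟨hsU, hsE⟩, hsC⟩ := hs
  have memU : ∀ (p : GSep V), p.1 ∪ p.2 = Finset.univ → ∀ v : V, v ∈ p.1 ∨ v ∈ p.2 := by
    intro p hp v
    have : v ∈ p.1 ∪ p.2 := hp ▸ Finset.mem_univ v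
    exact Finset.mem_union.mp this
  have hrV := memU r hrU
  have hsV := memU s hsU
  -- the clique r.1 ∩ r.2 cannot be split by s
  have hsplit : (r.1 ∩ r.2) ⊆ s.1 ∨ (r.1 ∩ r.2) ⊆ s.2 := by
    by_contra h
    push_neg at h
    obtain ⟨x, hx, hxC⟩ := Finset.not_subset.mp h.1
    obtain ⟨y, hy, hyD⟩ := Finset.not_subset.mp h.2
    have hxD : x ∈ s.2 := (hsV x).resolve_left hxC
    have hyC : y ∈ s.1 := (hsV y).resolve_right hyD
    have hne : y ≠ x := by rintro rfl; exact hxC hyC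
    have hadj : G.Adj y x := hrC (Finset.mem_coe.mpr hy) (Finset.mem_coe.mpr hx) hne
    exact hsE y x hadj hyC hyD hxD hxC
  rcases hsplit with hX | hX
  · -- X ⊆ s.1 : the join works
    left
    have hsep : ((r.1 ∪ s.1) ∩ (r.2 ∩ s.2)) ⊆ s.1 ∩ s.2 := by
      intro x hx
      simp only [Finset.mem_inter, Finset.mem_union] at hx ⊢
      refine ⟨?_, hx.2.2⟩
      rcases hx.1 with hA | hC
      · exact hX (Finset.mem_inter.mpr ⟨hA, hx.2.1⟩)
      · exact hC
    refine ⟨⟨⟨?_, ?_⟩, ?_⟩, ?_⟩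
    · ext v
      simp only [sepJoin, Finset.mem_union, Finset.mem_inter, Finset.mem_univ, iff_true]
      rcases hrV v with h1 | h1 <;> rcases hsV v with h2 | h2 <;> tauto
    · intro a b hab ha1 ha2 hb1 hb2
      simp only [sepJoin, Finset.mem_union, Finset.mem_inter, not_and, not_or] at ha1 ha2 hb1 hb2
      by_cases haA : a ∈ r.1
      · by_cases haB : a ∈ r.2
        · have haD : a ∉ s.2 := fun h => ha2 haB h
          have haC : a ∈ s.1 := (hsV a).resolve_right haD
          exact hsE a b hab haC haD hb1.2 hb2.2
        · exact hrE a b hab haA haB hb1.1 hb2.1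
      · have haC : a ∈ s.1 := ha1.resolve_left haA
        have haB : a ∈ r.2 := (hrV a).resolve_left haA
        have haD : a ∉ s.2 := fun h => ha2 haB h
        exact hsE a b hab haC haD hb1.2 hb2.2
    · exact hsC.subset (by exact_mod_cast hsep)
    · exact lt_of_le_of_lt (Finset.card_le_card hsep) hsk
  · -- X ⊆ s.2 : the meet works
    right
    have hsep : ((r.1 ∩ s.1) ∩ (r.2 ∪ s.2)) ⊆ s.1 ∩ s.2 := by
      intro x hx
      simp only [Finset.mem_inter, Finset.mem_union] at hx ⊢
      refine ⟨hx.1.2, ?_⟩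
      rcases hx.2 with hB | hD
      · exact hX (Finset.mem_inter.mpr ⟨hx.1.1, hB⟩)
      · exact hD
    refine ⟨⟨⟨?_, ?_⟩, ?_⟩, ?_⟩
    · ext v
      simp only [sepMeet, Finset.mem_union, Finset.mem_inter, Finset.mem_univ, iff_true]
      rcases hrV v with h1 | h1 <;> rcases hsV v with h2 | h2 <;> tauto
    · intro a b hab ha1 ha2 hb1 hb2
      simp only [sepMeet, Finset.mem_union, Finset.mem_inter, not_or, not_and] at ha1 ha2 hb1 hb2
      by_cases hbA : b ∈ r.1
      · have hbC : b ∉ s.1 := fun h => hb2 hbA h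
        have hbD : b ∈ s.2 := (hsV b).resolve_left hbC
        exact hsE a b hab ha1.2 ha2.2 hbD hbC
      · have hbB : b ∈ r.2 := (hrV b).resolve_left hbA
        exact hrE a b hab ha1.1 ha2.1 hbB hbA
    · exact hsC.subset (by exact_mod_cast hsep)
    · exact lt_of_le_of_lt (Finset.card_le_card hsep) hsk
end

section
/- Let U be a universe of separations, I a finite index set with a partial order ≼, and (A_i | i ∈ I) a family of nonempty *-closed subsets of U that splinters hierarchically with respect to ≼. If K ⊆ I is an antichain in ≼, then the set of extremal elements of ⋃_{k ∈ K} A_k is nested. -/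
/-!
If a family of nonempty `*`-closed subsets of a universe of separations
splinters hierarchically with respect to a partial order on its index set,
then for every antichain `K` of indices the set of extremal elements of
`⋃_{k ∈ K} A k` is nested.
-/

variable {U : Type*}

/-- `c` is a corner separation of `r` and `s`: a meet of orientations of `r`
and `s`, or the involution of such a meet. -/
def IsCornerM [Lattice U] (star : U → U) (c r s : U) : Prop :=
  ∃ r' s', (r' = r ∨ r' = star r) ∧ (s' = s ∨ s' = star s) ∧
    (c = r' ⊓ s' ∨ c = star (r' ⊓ s'))

/-- The corner separations `c₁` and `c₂` of `r` and `s` are from different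
sides of `r`: for orientations with `c₁ = r' ⊓ s'`, some orientation of `c₂`
equals `star r' ⊓ s'` or `star r' ⊓ star s'`. -/
def DiffSides [Lattice U] (star : U → U) (r s c₁ c₂ : U) : Prop :=
  ∃ r' s', (r' = r ∨ r' = star r) ∧ (s' = s ∨ s' = star s) ∧
    (c₁ = r' ⊓ s' ∨ c₁ = star (r' ⊓ s')) ∧
    (c₂ = star r' ⊓ s' ∨ c₂ = star (star r' ⊓ s') ∨
     c₂ = star r' ⊓ star s' ∨ c₂ = star (star r' ⊓ star s'))

/-- A family `A` of subsets of `U` splinters hierarchically with respect to a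
partial order on its index set. -/
def SplintersHier [Lattice U] (star : U → U) {I : Type*} [PartialOrder I]
    (A : I → Set U) : Prop :=
  ∀ i j : I, ∀ a ∈ A i, ∀ b ∈ A j,
    (i < j →
      (∃ c, IsCornerM star c a b ∧ c ∈ A j) ∨
      (∃ c₁ c₂, DiffSides star a b c₁ c₂ ∧ c₁ ∈ A i ∧ c₂ ∈ A i)) ∧
    (¬ i < j → ¬ j < i →
      ∃ c₁ c₂, ((DiffSides star a b c₁ c₂ ∧ c₁ ∈ A i) ∨
                (DiffSides star b a c₁ c₂ ∧ c₁ ∈ A j)) ∧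
        c₂ ∈ A i ∪ A j)

/-- `a` is extremal in `A`: some orientation of `a` is a maximal element of
the set of orientations of elements of `A`. -/
def ExtremalIn [Lattice U] (star : U → U) (A : Set U) (a : U) : Prop :=
  a ∈ A ∧ ∃ a', (a' = a ∨ a' = star a) ∧ (a' ∈ A ∨ star a' ∈ A) ∧
    ∀ b : U, (b ∈ A ∨ star b ∈ A) → a' ≤ b → b = a'

lemma nested_of_le' [Lattice U] {star : U → U} (hinv : ∀ s, star (star s) = s)
    {r s x y : U} (hx : x = r ∨ x = star r) (hy : y = s ∨ y = star s)
    (h : x ≤ y) : Nested star r s := by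
  unfold Nested
  rcases hx with rfl | rfl <;> rcases hy with rfl | rfl <;> tauto

/-- **The extremal elements of the union over an antichain are nested.** -/
theorem extremal_elements_nested [Lattice U] [Fintype U]
    (star : U → U) (hstar : OrderReversingInvolution star)
    {I : Type*} [Fintype I] [PartialOrder I] (A : I → Set U)
    (hne : ∀ i, (A i).Nonempty) (hclosed : ∀ i, ∀ a ∈ A i, star a ∈ A i)
    (hsp : SplintersHier star A)
    (K : Set I) (hK : ∀ k₁ ∈ K, ∀ k₂ ∈ K, k₁ ≤ k₂ → k₁ = k₂) :
    ∀ a b : U, ExtremalIn star (⋃ k ∈ K, A k) a →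
      ExtremalIn star (⋃ k ∈ K, A k) b → Nested star a b := by
  obtain ⟨hinv, hord⟩ := hstar
  intro a b ha hb
  classical
  set S : Set U := ⋃ k ∈ K, A k with hSdef
  obtain ⟨haS, a_m, ham_or, ham_S, hamax⟩ := ha
  obtain ⟨hbS, b_m, hbm_or, hbm_S, hbmax⟩ := hb
  have key : ∀ m u c : U, (∀ x : U, (x ∈ S ∨ star x ∈ S) → m ≤ x → x = m) →
      c ∈ S → (c = star m ⊓ u ∨ c = star (star m ⊓ u)) → star m ≤ u := by
    intro m u c hmax hcS hceq
    have hSclosed : ∀ x ∈ S, star x ∈ S := by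
      intro x hx
      simp only [hSdef, Set.mem_iUnion] at hx ⊢
      obtain ⟨k, hk, hxk⟩ := hx
      exact ⟨k, hk, hclosed k x hxk⟩
    have hdS : star m ⊓ u ∈ S ∨ star (star m ⊓ u) ∈ S := by
      rcases hceq with h | h
      · exact Or.inl (h ▸ hcS)
      · exact Or.inr (h ▸ hcS)
    have h1 : m ≤ star (star m ⊓ u) := by
      have := (hord (star m ⊓ u) (star m)).mp inf_le_left
      rwa [hinv] at this
    have h2 : star (star m ⊓ u) = m := by
      apply hmax _ _ h1
      rcases hdS with h | h
      · exact Or.inr (by rwa [hinv])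
      · exact Or.inl h
    have h3 : star m ⊓ u = star m := by
      have := congrArg star h2
      rwa [hinv] at this
    calc star m = star m ⊓ u := h3.symm
      _ ≤ u := inf_le_right
  obtain ⟨i, hiK, hai⟩ : ∃ i ∈ K, a ∈ A i := by
    simpa only [hSdef, Set.mem_iUnion, exists_prop] using haS
  obtain ⟨j, hjK, hbj⟩ : ∃ j ∈ K, b ∈ A j := by
    simpa only [hSdef, Set.mem_iUnion, exists_prop] using hbS
  have hnij : ¬ i < j := fun h => h.ne (hK i hiK j hjK h.le)
  have hnji : ¬ j < i := fun h => h.ne (hK j hjK i hiK h.le)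
  have hAiS : A i ⊆ S := by
    intro x hx; simp only [hSdef, Set.mem_iUnion]; exact ⟨i, hiK, hx⟩
  have hAjS : A j ⊆ S := by
    intro x hx; simp only [hSdef, Set.mem_iUnion]; exact ⟨j, hjK, hx⟩
  obtain ⟨c₁, c₂, hdisj, hc₂⟩ := (hsp i j a hai b hbj).2 hnij hnji
  have hc₂S : c₂ ∈ S := by rcases hc₂ with h | h; exacts [hAiS h, hAjS h]
  have swap : ∀ {x y : U}, (x = b ∨ x = star b) → (y = a ∨ y = star a) →
      x ≤ y → Nested star a b := by
    intro x y hx hy hxy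
    have h' : star y ≤ star x := (hord x y).mp hxy
    have hy' : star y = a ∨ star y = star a := by
      rcases hy with h | h
      · right; rw [h]
      · left; rw [h, hinv]
    have hx' : star x = b ∨ star x = star b := by
      rcases hx with h | h
      · right; rw [h]
      · left; rw [h, hinv]
    exact nested_of_le' hinv hy' hx' h'
  rcases hdisj with ⟨⟨r', s', hr', hs', hc1, hc2⟩, hc₁A⟩ |
      ⟨⟨r', s', hr', hs', hc1, hc2⟩, hc₁A⟩
  · -- DiffSides a b; use extremality of a
    have hc₁S : c₁ ∈ S := hAiS hc₁A
    have hsm : star a_m = a ∨ star a_m = star a := by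
      rcases ham_or with h | h
      · right; rw [h]
      · left; rw [h, hinv]
    have hss : star s' = b ∨ star s' = star b := by
      rcases hs' with h | h
      · right; rw [h]
      · left; rw [h, hinv]
    have hcase : r' = star a_m ∨ star r' = star a_m := by
      rcases ham_or with h | h <;> rcases hr' with h' | h' <;> simp [h, h', hinv]
    rcases hcase with hc | hc
    · exact nested_of_le' hinv hsm hs'
        (key a_m s' c₁ hamax hc₁S (by rw [← hc]; exact hc1))
    · rcases hc2 with h | h | h | h
      · exact nested_of_le' hinv hsm hs'
          (key a_m s' c₂ hamax hc₂S (Or.inl (by rw [← hc]; exact h)))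
      · exact nested_of_le' hinv hsm hs'
          (key a_m s' c₂ hamax hc₂S (Or.inr (by rw [← hc]; exact h)))
      · exact nested_of_le' hinv hsm hss
          (key a_m (star s') c₂ hamax hc₂S (Or.inl (by rw [← hc]; exact h)))
      · exact nested_of_le' hinv hsm hss
          (key a_m (star s') c₂ hamax hc₂S (Or.inr (by rw [← hc]; exact h)))
  · -- DiffSides b a; use extremality of b
    have hc₁S : c₁ ∈ S := hAjS hc₁A
    have hsm : star b_m = b ∨ star b_m = star b := by
      rcases hbm_or with h | h
      · right; rw [h]
      · left; rw [h, hinv]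
    have hss : star s' = a ∨ star s' = star a := by
      rcases hs' with h | h
      · right; rw [h]
      · left; rw [h, hinv]
    have hcase : r' = star b_m ∨ star r' = star b_m := by
      rcases hbm_or with h | h <;> rcases hr' with h' | h' <;> simp [h, h', hinv]
    rcases hcase with hc | hc
    · exact swap hsm hs'
        (key b_m s' c₁ hbmax hc₁S (by rw [← hc]; exact hc1))
    · rcases hc2 with h | h | h | h
      · exact swap hsm hs'
          (key b_m s' c₂ hbmax hc₂S (Or.inl (by rw [← hc]; exact h)))
      · exact swap hsm hs'
          (key b_m s' c₂ hbmax hc₂S (Or.inr (by rw [← hc]; exact h)))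
      · exact swap hsm hss
          (key b_m (star s') c₂ hbmax hc₂S (Or.inl (by rw [← hc]; exact h)))
      · exact swap hsm hss
          (key b_m (star s') c₂ hbmax hc₂S (Or.inr (by rw [← hc]; exact h)))
end

section
/- (Canonical Splinter Lemma) Let U be a universe of separations and I a finite index set with a partial order ≼. There is a map 𝒜 ↦ N(𝒜), defined on all families 𝒜 = (A_i | i ∈ I) of nonempty *-closed subsets of U that splinter hierarchically with respect to ≼, such that N(𝒜) is a nested subset of U meeting every A_i, and such that N is canonical: for every automorphism φ of U (an order-isomorphism of the lattice U commuting with the involution), if φ(𝒜) := (φ(A_i) | i ∈ I) splinters hierarchically with respect to ≼, then N(φ(𝒜)) = φ(N(𝒜)). -/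
/-!
Canonical Splinter Lemma: for every family of nonempty `*`-closed subsets of a
universe of separations that splinters hierarchically there is a nested set
meeting every member of the family, and this nested set can be chosen
canonically, i.e. equivariantly under automorphisms of the universe.
-/

variable {U : Type*}

/-! ### Auxiliary development for the proof -/

section CSLAux

variable [Lattice U] {star : U → U}

namespace CSL

lemma le_iff (h : OrderReversingInvolution star) {r s : U} : r ≤ s ↔ star s ≤ star r := h.2 r s

lemma star_le (h : OrderReversingInvolution star) {r s : U} : star r ≤ s ↔ star s ≤ r := by
  rw [h.2 (star r) s, h.1]

lemma le_star (h : OrderReversingInvolution star) {r s : U} : r ≤ star s ↔ s ≤ star r := by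
  rw [h.2 r (star s), h.1]

lemma star_inf (h : OrderReversingInvolution star) (x y : U) :
    star (x ⊓ y) = star x ⊔ star y := by
  apply le_antisymm
  · rw [h.2 (star (x ⊓ y)) (star x ⊔ star y), h.1]
    exact le_inf ((star_le h).mpr le_sup_left) ((star_le h).mpr le_sup_right)
  · exact sup_le ((le_iff h).mp inf_le_left) ((le_iff h).mp inf_le_right)

lemma nested_symm (h : OrderReversingInvolution star) {a b : U} :
    Nested star a b → Nested star b a := by
  rintro (hh | hh | hh | hh)
  · exact Or.inr (Or.inr (Or.inr ((le_iff h).mp hh)))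
  · exact Or.inr (Or.inl ((le_star h).mp hh))
  · exact Or.inr (Or.inr (Or.inl ((star_le h).mp hh)))
  · exact Or.inl ((le_iff h).mpr hh)

lemma nested_star_right (h : OrderReversingInvolution star) {a b : U} :
    Nested star a (star b) ↔ Nested star a b := by
  unfold Nested
  rw [h.1]
  tauto

lemma nested_star_left (h : OrderReversingInvolution star) {a b : U} :
    Nested star (star a) b ↔ Nested star a b := by
  unfold Nested
  rw [h.1]
  tauto

lemma nested_orient_right (h : OrderReversingInvolution star) {e a v : U}
    (hn : Nested star e a) (hv : v = a ∨ v = star a) : Nested star e v := by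
  rcases hv with rfl | rfl
  · exact hn
  · exact (nested_star_right h).mpr hn

lemma nested_orient (h : OrderReversingInvolution star) {u v a b : U}
    (hu : u = a ∨ u = star a) (hv : v = b ∨ v = star b) :
    Nested star u v ↔ Nested star a b := by
  rcases hu with rfl | rfl <;> rcases hv with rfl | rfl <;>
    simp [nested_star_left h, nested_star_right h]

lemma nested_of_le_orient (h : OrderReversingInvolution star) {e x u : U}
    (hx : x ≤ u) (hu : u = e ∨ u = star e) : Nested star e x := by
  rcases hu with rfl | rfl
  · exact Or.inr (Or.inr (Or.inr ((le_iff h).mp hx)))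
  · exact Or.inr (Or.inl ((le_star h).mp hx))

lemma nested_refl {a : U} : Nested star a a := Or.inl le_rfl

lemma orient_star (h : OrderReversingInvolution star) {r' a : U}
    (hr : r' = a ∨ r' = star a) : star r' = a ∨ star r' = star a := by
  rcases hr with rfl | rfl
  · exact Or.inr rfl
  · exact Or.inl (h.1 a)

/-- The fish lemma: if `u` and `v` cross and `f` is nested with both, then `f`
is nested with the corner `u ⊓ v`. -/
lemma fish (h : OrderReversingInvolution star) {u v f : U} (huv : ¬ Nested star u v)
    (hfu : Nested star f u) (hfv : Nested star f v) : Nested star f (u ⊓ v) := by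
  have hsi := star_inf h u v
  rcases hfu with h1 | h1 | h1 | h1
  · rcases hfv with h2 | h2 | h2 | h2
    · exact Or.inl (le_inf h1 h2)
    · exact Or.inr (Or.inl (h2.trans (by rw [hsi]; exact le_sup_right)))
    · exact absurd (Or.inr (Or.inr (Or.inl ((star_le h).mp (((star_le h).mp h2).trans h1))))) huv
    · exact Or.inr (Or.inr (Or.inr ((le_iff h).mp (inf_le_right.trans ((le_iff h).mpr h2)))))
  · exact Or.inr (Or.inl (h1.trans (by rw [hsi]; exact le_sup_left)))
  · rcases hfv with h2 | h2 | h2 | h2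
    · exact absurd (Or.inr (Or.inr (Or.inl (((star_le h).mp h1).trans h2)))) huv
    · exact Or.inr (Or.inl (h2.trans (by rw [hsi]; exact le_sup_right)))
    · exact Or.inr (Or.inr (Or.inl (le_inf h1 h2)))
    · exact Or.inr (Or.inr (Or.inr ((le_iff h).mp (inf_le_right.trans ((le_iff h).mpr h2)))))
  · exact Or.inr (Or.inr (Or.inr ((le_iff h).mp (inf_le_left.trans ((le_iff h).mpr h1)))))

/-- Maximality collapse: if `a` is maximal in a `star`-closed set `S` containing
a corner over `star a`, the other corner component is below `a`. -/
lemma collapse (h : OrderReversingInvolution star) {S : Set U}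
    (hS : ∀ x ∈ S, star x ∈ S) {a : U}
    (hmax : ∀ y ∈ S, a ≤ y → a = y) {t c : U} (hc : c ∈ S)
    (hform : c = star a ⊓ t ∨ c = star (star a ⊓ t)) : star t ≤ a := by
  have key : star (star a ⊓ t) = a ⊔ star t := by rw [star_inf h, h.1]
  have hmem : a ⊔ star t ∈ S := by
    rcases hform with rfl | rfl
    · have := hS _ hc; rwa [key] at this
    · rwa [key] at hc
  have heq := hmax _ hmem le_sup_left
  exact le_sup_right.trans heq.ge

lemma nested_of_corners (h : OrderReversingInvolution star) {S : Set U}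
    (hS : ∀ x ∈ S, star x ∈ S) {a b : U}
    (hmax : ∀ y ∈ S, a ≤ y → a = y) {c₁ c₂ : U}
    (hd : DiffSides star a b c₁ c₂) (h1 : c₁ ∈ S) (h2 : c₂ ∈ S) :
    Nested star a b := by
  obtain ⟨r', s', hr', hs', hc1, hc2⟩ := hd
  have fin : ∀ t : U, (t = b ∨ t = star b) → star t ≤ a → Nested star a b := by
    rintro t (rfl | rfl) ht
    · exact Or.inr (Or.inr (Or.inl ((star_le h).mpr ht)))
    · rw [h.1] at ht
      exact Or.inr (Or.inr (Or.inr ((le_iff h).mp ht)))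
  rcases hr' with rfl | hr'
  · -- r' = a : use c₂ whose `a`-component is `star a`
    rcases hc2 with h' | h' | h' | h'
    · exact fin s' hs' (collapse h hS hmax h2 (Or.inl h'))
    · exact fin s' hs' (collapse h hS hmax h2 (Or.inr h'))
    · exact fin (star s') (orient_star h hs') (collapse h hS hmax h2 (Or.inl h'))
    · exact fin (star s') (orient_star h hs') (collapse h hS hmax h2 (Or.inr h'))
  · -- r' = star a : use c₁
    rw [hr'] at hc1
    exact fin s' hs' (collapse h hS hmax h1 hc1)

lemma diffSides_corner₁ {a b c₁ c₂ : U} (hd : DiffSides star a b c₁ c₂) :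
    IsCornerM star c₁ a b := by
  obtain ⟨r', s', hr, hs, hc1, _⟩ := hd
  exact ⟨r', s', hr, hs, hc1⟩

lemma diffSides_corner₂ (h : OrderReversingInvolution star) {a b c₁ c₂ : U}
    (hd : DiffSides star a b c₁ c₂) : IsCornerM star c₂ a b := by
  obtain ⟨r', s', hr, hs, _, hc2⟩ := hd
  rcases hc2 with h' | h' | h' | h'
  · exact ⟨star r', s', orient_star h hr, hs, Or.inl h'⟩
  · exact ⟨star r', s', orient_star h hr, hs, Or.inr h'⟩
  · exact ⟨star r', star s', orient_star h hr, orient_star h hs, Or.inl h'⟩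
  · exact ⟨star r', star s', orient_star h hr, orient_star h hs, Or.inr h'⟩

lemma isCornerM_swap {a b c : U} (hc : IsCornerM star c a b) : IsCornerM star c b a := by
  obtain ⟨r', s', hr, hs, hform⟩ := hc
  refine ⟨s', r', hs, hr, ?_⟩
  rw [inf_comm s' r']
  exact hform

lemma nested_corner (h : OrderReversingInvolution star) {a b e c : U}
    (hab : ¬ Nested star a b) (he_a : Nested star e a) (he_b : Nested star e b)
    (hc : IsCornerM star c a b) : Nested star e c := by
  obtain ⟨r', s', hr, hs, hform⟩ := hc
  have huv : ¬ Nested star r' s' := fun hn => hab ((nested_orient h hr hs).mp hn)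
  have hf := fish h huv (nested_orient_right h he_a hr) (nested_orient_right h he_b hs)
  rcases hform with rfl | rfl
  · exact hf
  · exact (nested_star_right h).mpr hf

lemma exists_orient_le (h : OrderReversingInvolution star) {a b : U}
    (hn : Nested star a b) :
    ∃ A₀ B₀ : U, (A₀ = a ∨ A₀ = star a) ∧ (B₀ = b ∨ B₀ = star b) ∧ B₀ ≤ A₀ := by
  rcases hn with hh | hh | hh | hh
  · exact ⟨star a, star b, Or.inr rfl, Or.inr rfl, (le_iff h).mp hh⟩
  · exact ⟨star a, b, Or.inr rfl, Or.inl rfl, (le_star h).mp hh⟩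
  · exact ⟨a, star b, Or.inl rfl, Or.inr rfl, (star_le h).mp hh⟩
  · exact ⟨a, b, Or.inl rfl, Or.inl rfl, (le_iff h).mpr hh⟩

/-- The set of maximal elements of a set. -/
def maxSet (A : Set U) : Set U := {x ∈ A | ∀ y ∈ A, x ≤ y → x = y}

/-- Restrict every member of the family to the separations nested with all of `E`. -/
def reduce (star : U → U) {I : Type*} (E : Set U) (A : I → Set U) : I → Set U :=
  fun j => {x ∈ A j | ∀ e ∈ E, Nested star e x}

/-- The canonical construction: process indices along the list; each time take the
maximal elements of the current head set and restrict the rest to separations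
nested with them. -/
def buildN (star : U → U) {I : Type*} : List I → (I → Set U) → Set U
  | [], _ => ∅
  | i :: L, A => maxSet (A i) ∪ buildN star L (reduce star (maxSet (A i)) A)

/-- Splintering hierarchically, relativised to a list of indices. -/
def SplinterOn (star : U → U) {I : Type*} [PartialOrder I] (L : List I)
    (A : I → Set U) : Prop :=
  ∀ i ∈ L, ∀ j ∈ L, ∀ a ∈ A i, ∀ b ∈ A j,
    (i < j →
      (∃ c, IsCornerM star c a b ∧ c ∈ A j) ∨
      (∃ c₁ c₂, DiffSides star a b c₁ c₂ ∧ c₁ ∈ A i ∧ c₂ ∈ A i)) ∧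
    (¬ i < j → ¬ j < i →
      ∃ c₁ c₂, ((DiffSides star a b c₁ c₂ ∧ c₁ ∈ A i) ∨
                (DiffSides star b a c₁ c₂ ∧ c₁ ∈ A j)) ∧
        c₂ ∈ A i ∪ A j)

end CSL

end CSLAux

section CSLMain

open CSL

variable [Lattice U] [Fintype U] {star : U → U}

lemma CSL.buildN_spec (h : OrderReversingInvolution star) {I : Type*} [PartialOrder I] :
    ∀ L : List I, L.Pairwise (fun a b => ¬ b < a) →
    ∀ A : I → Set U, (∀ i ∈ L, (A i).Nonempty) → (∀ i ∈ L, ∀ a ∈ A i, star a ∈ A i) →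
    SplinterOn star L A →
    (∀ x ∈ buildN star L A, ∃ i ∈ L, x ∈ A i) ∧
    (∀ x ∈ buildN star L A, ∀ y ∈ buildN star L A, Nested star x y) ∧
    (∀ i ∈ L, ∃ a ∈ A i, a ∈ buildN star L A) := by
  intro L
  induction L with
  | nil =>
    intro _ A _ _ _
    refine ⟨?_, ?_, ?_⟩ <;> intro x hx <;> simp [buildN] at hx
  | cons i L ih =>
    intro hL A hne hsc hsp
    classical
    obtain ⟨hhead, htail⟩ := List.pairwise_cons.mp hL
    have hiL : i ∈ i :: L := List.mem_cons_self
    have hEsub : maxSet (A i) ⊆ A i := fun x hx => hx.1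
    have hEmax : ∀ x ∈ maxSet (A i), ∀ y ∈ A i, x ≤ y → x = y := fun x hx => hx.2
    have hAisc := hsc i hiL
    -- maxSet nonempty
    have hEne : (maxSet (A i)).Nonempty := by
      obtain ⟨x, hx⟩ := hne i hiL
      obtain ⟨m, hm, hmax⟩ : ∃ m ∈ (A i).toFinite.toFinset, ∀ y ∈ (A i).toFinite.toFinset, ¬ m < y := by
        obtain ⟨m, hm⟩ := Finset.exists_maximal (s := (A i).toFinite.toFinset)
          ⟨x, (Set.Finite.mem_toFinset _).mpr hx⟩
        exact ⟨m, hm.1, fun y hy hlt => hlt.not_ge (hm.2 hy hlt.le)⟩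
      rw [Set.Finite.mem_toFinset] at hm
      refine ⟨m, hm, fun y hy hle => ?_⟩
      by_contra hne'
      exact hmax y ((Set.Finite.mem_toFinset _).mpr hy) (lt_of_le_of_ne hle hne')
    -- maxSet is nested
    have hEnested : ∀ x ∈ maxSet (A i), ∀ y ∈ maxSet (A i), Nested star x y := by
      intro x hx y hy
      by_cases hn : Nested star x y
      · exact hn
      exfalso
      obtain ⟨-, h2⟩ := hsp i hiL i hiL x (hEsub hx) y (hEsub hy)
      obtain ⟨c₁, c₂, hdisj, hc₂⟩ := h2 (lt_irrefl i) (lt_irrefl i)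
      rw [Set.union_self] at hc₂
      rcases hdisj with ⟨hd, hc₁⟩ | ⟨hd, hc₁⟩
      · exact hn (nested_of_corners h hAisc (hEmax x hx) hd hc₁ hc₂)
      · exact hn (nested_symm h (nested_of_corners h hAisc (hEmax y hy) hd hc₁ hc₂))
    have hA'sub : ∀ j, reduce star (maxSet (A i)) A j ⊆ A j := fun j x hx => hx.1
    have hA'sc : ∀ j ∈ L, ∀ a ∈ reduce star (maxSet (A i)) A j,
        star a ∈ reduce star (maxSet (A i)) A j := by
      intro j hj x hx
      exact ⟨hsc j (List.mem_cons_of_mem _ hj) x hx.1,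
        fun e he => (nested_star_right h).mpr (hx.2 e he)⟩
    -- nonemptiness of the reduced sets
    have hA'ne : ∀ j ∈ L, (reduce star (maxSet (A i)) A j).Nonempty := by
      intro j hj
      have hjL : j ∈ i :: L := List.mem_cons_of_mem _ hj
      set n : U → ℕ :=
        fun x => (Finset.univ.filter fun e => e ∈ maxSet (A i) ∧ ¬ Nested star e x).card with hn
      obtain ⟨x, hx⟩ := hne j hjL
      obtain ⟨a, haA, hamin⟩ := Finset.exists_min_image ((A j).toFinite.toFinset) n
        ⟨x, (Set.Finite.mem_toFinset _).mpr hx⟩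
      rw [Set.Finite.mem_toFinset] at haA
      by_cases hzero : ∀ e ∈ maxSet (A i), Nested star e a
      · exact ⟨a, haA, hzero⟩
      push_neg at hzero
      obtain ⟨e, heE, hcross⟩ := hzero
      exfalso
      -- there is a corner of `e` and `a` in `A j`
      have hcornerEx : ∃ c, c ∈ A j ∧ IsCornerM star c e a := by
        obtain ⟨h1, h2⟩ := hsp i hiL j hjL e (hEsub heE) a haA
        by_cases hij : i < j
        · rcases h1 hij with ⟨c, hc, hcj⟩ | ⟨c₁, c₂, hd, hc₁, hc₂⟩
          · exact ⟨c, hcj, hc⟩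
          · exact absurd (nested_of_corners h hAisc (hEmax e heE) hd hc₁ hc₂) hcross
        · obtain ⟨c₁, c₂, hdisj, hc₂⟩ := h2 hij (hhead j hj)
          rcases hdisj with ⟨hd, hc₁⟩ | ⟨hd, hc₁⟩
          · rcases hc₂ with hc₂ | hc₂
            · exact absurd (nested_of_corners h hAisc (hEmax e heE) hd hc₁ hc₂) hcross
            · exact ⟨c₂, hc₂, diffSides_corner₂ h hd⟩
          · exact ⟨c₁, hc₁, isCornerM_swap (diffSides_corner₁ hd)⟩
      obtain ⟨c, hcA, u, v, hu, hv, hform⟩ := hcornerEx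
      have hdA : u ⊓ v ∈ A j := by
        rcases hform with rfl | rfl
        · exact hcA
        · have := hsc j hjL _ hcA
          rwa [h.1] at this
      have hNed : Nested star e (u ⊓ v) := nested_of_le_orient h inf_le_left hu
      have hsubs : (Finset.univ.filter fun f => f ∈ maxSet (A i) ∧ ¬ Nested star f (u ⊓ v)) ⊆
          (Finset.univ.filter fun f => f ∈ maxSet (A i) ∧ ¬ Nested star f a) := by
        intro f hf
        simp only [Finset.mem_filter, Finset.mem_univ, true_and] at hf ⊢
        obtain ⟨hfE, hfd⟩ := hf
        refine ⟨hfE, fun hfa => hfd ?_⟩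
        have huv : ¬ Nested star u v := fun hn => hcross ((nested_orient h hu hv).mp hn)
        exact fish h huv (nested_orient_right h (hEnested f hfE e heE) hu)
          (nested_orient_right h hfa hv)
      have hssub : (Finset.univ.filter fun f => f ∈ maxSet (A i) ∧ ¬ Nested star f (u ⊓ v)) ⊂
          (Finset.univ.filter fun f => f ∈ maxSet (A i) ∧ ¬ Nested star f a) := by
        refine (Finset.ssubset_iff_of_subset hsubs).mpr ⟨e, ?_, ?_⟩
        · simp only [Finset.mem_filter, Finset.mem_univ, true_and]
          exact ⟨heE, hcross⟩
        · simp only [Finset.mem_filter, Finset.mem_univ, true_and, not_and, not_not]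
          intro _
          exact hNed
      have hlt : n (u ⊓ v) < n a := Finset.card_lt_card hssub
      exact absurd (hamin (u ⊓ v) ((Set.Finite.mem_toFinset _).mpr hdA)) (not_le.mpr hlt)
    -- the reduced family splinters
    have hsp' : SplinterOn star L (reduce star (maxSet (A i)) A) := by
      intro i' hi' j' hj' a ha b hb
      have hi'' := List.mem_cons_of_mem i hi'
      have hj'' := List.mem_cons_of_mem i hj'
      obtain ⟨haA, haN⟩ := ha
      obtain ⟨hbA, hbN⟩ := hb
      by_cases hN : Nested star a b
      · obtain ⟨A₀, B₀, hA₀, hB₀, hle⟩ := exists_orient_le h hN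
        have hBmem : B₀ ∈ reduce star (maxSet (A i)) A j' := by
          rcases hB₀ with h' | h'
          · rw [h']
            exact ⟨hbA, hbN⟩
          · rw [h']
            exact hA'sc j' hj' b ⟨hbA, hbN⟩
        have hAmem' : star A₀ ∈ reduce star (maxSet (A i)) A i' := by
          rcases hA₀ with h' | h'
          · rw [h']
            exact hA'sc i' hi' a ⟨haA, haN⟩
          · rw [h', h.1]
            exact ⟨haA, haN⟩
        constructor
        · intro _
          left
          refine ⟨A₀ ⊓ B₀, ⟨A₀, B₀, hA₀, hB₀, Or.inl rfl⟩, ?_⟩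
          rw [inf_eq_right.mpr hle]
          exact hBmem
        · intro _ _
          refine ⟨B₀ ⊓ A₀, star B₀ ⊓ star A₀,
            Or.inr ⟨⟨B₀, A₀, hB₀, hA₀, Or.inl rfl, Or.inr (Or.inr (Or.inl rfl))⟩, ?_⟩, ?_⟩
          · rw [inf_eq_left.mpr hle]
            exact hBmem
          · rw [inf_eq_right.mpr ((le_iff h).mp hle)]
            exact Set.mem_union_left _ hAmem'
      · have upgrade : ∀ (k : I) (c : U), c ∈ A k → IsCornerM star c a b →
            c ∈ reduce star (maxSet (A i)) A k :=
          fun k c hc hcorner =>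
            ⟨hc, fun e he => nested_corner h hN (haN e he) (hbN e he) hcorner⟩
        obtain ⟨h1, h2⟩ := hsp i' hi'' j' hj'' a haA b hbA
        constructor
        · intro hlt
          rcases h1 hlt with ⟨c, hc, hcj⟩ | ⟨c₁, c₂, hd, hc₁, hc₂⟩
          · exact Or.inl ⟨c, hc, upgrade j' c hcj hc⟩
          · exact Or.inr ⟨c₁, c₂, hd, upgrade i' c₁ hc₁ (diffSides_corner₁ hd),
              upgrade i' c₂ hc₂ (diffSides_corner₂ h hd)⟩
        · intro hij hji
          obtain ⟨c₁, c₂, hdisj, hc₂⟩ := h2 hij hji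
          have hc₂corner : IsCornerM star c₂ a b := by
            rcases hdisj with ⟨hd, -⟩ | ⟨hd, -⟩
            · exact diffSides_corner₂ h hd
            · exact isCornerM_swap (diffSides_corner₂ h hd)
          refine ⟨c₁, c₂, ?_, ?_⟩
          · rcases hdisj with ⟨hd, hc₁⟩ | ⟨hd, hc₁⟩
            · exact Or.inl ⟨hd, upgrade i' c₁ hc₁ (diffSides_corner₁ hd)⟩
            · exact Or.inr ⟨hd, upgrade j' c₁ hc₁ (isCornerM_swap (diffSides_corner₁ hd))⟩
          · rcases hc₂ with hc₂ | hc₂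
            · exact Set.mem_union_left _ (upgrade i' c₂ hc₂ hc₂corner)
            · exact Set.mem_union_right _ (upgrade j' c₂ hc₂ hc₂corner)
    obtain ⟨ihsub, ihnested, ihmeets⟩ := ih htail (reduce star (maxSet (A i)) A) hA'ne hA'sc hsp'
    have hunfold : buildN star (i :: L) A =
        maxSet (A i) ∪ buildN star L (reduce star (maxSet (A i)) A) := rfl
    refine ⟨?_, ?_, ?_⟩
    · intro x hx
      rw [hunfold] at hx
      rcases hx with hx | hx
      · exact ⟨i, hiL, hEsub hx⟩
      · obtain ⟨k, hk, hxk⟩ := ihsub x hx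
        exact ⟨k, List.mem_cons_of_mem _ hk, (hA'sub k) hxk⟩
    · intro x hx y hy
      rw [hunfold] at hx hy
      rcases hx with hx | hx <;> rcases hy with hy | hy
      · exact hEnested x hx y hy
      · obtain ⟨k, hk, hyk⟩ := ihsub y hy
        exact hyk.2 x hx
      · obtain ⟨k, hk, hxk⟩ := ihsub x hx
        exact nested_symm h (hxk.2 y hy)
      · exact ihnested x hx y hy
    · intro k hk
      rw [hunfold]
      rcases List.mem_cons.mp hk with rfl | hk'
      · obtain ⟨m, hm⟩ := hEne
        exact ⟨m, hEsub hm, Set.mem_union_left _ hm⟩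
      · obtain ⟨a, ha, haN⟩ := ihmeets k hk'
        exact ⟨a, (hA'sub k) ha, Set.mem_union_right _ haN⟩

lemma CSL.nested_map (h : OrderReversingInvolution star) (φ : U ≃o U)
    (hφ : ∀ s : U, φ (star s) = star (φ s)) (a b : U) :
    Nested star (φ a) (φ b) ↔ Nested star a b := by
  unfold Nested
  rw [← hφ a, ← hφ b]
  simp only [OrderIso.le_iff_le]

lemma CSL.maxSet_image (φ : U ≃o U) (S : Set U) : maxSet (φ '' S) = φ '' maxSet S := by
  ext x
  simp only [maxSet, Set.mem_setOf_eq, Set.mem_image]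
  constructor
  · rintro ⟨⟨x₀, hx₀, rfl⟩, hmax⟩
    exact ⟨x₀, ⟨hx₀, fun y hy hle =>
      φ.injective (hmax (φ y) ⟨y, hy, rfl⟩ (φ.le_iff_le.mpr hle))⟩, rfl⟩
  · rintro ⟨x₀, ⟨hx₀, hmax⟩, rfl⟩
    refine ⟨⟨x₀, hx₀, rfl⟩, ?_⟩
    rintro y ⟨y₀, hy₀, rfl⟩ hle
    rw [hmax y₀ hy₀ (φ.le_iff_le.mp hle)]

lemma CSL.reduce_image (h : OrderReversingInvolution star) (φ : U ≃o U)
    (hφ : ∀ s : U, φ (star s) = star (φ s)) {I : Type*} (E : Set U) (A : I → Set U) :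
    reduce star (φ '' E) (fun j => φ '' A j) = fun j => φ '' reduce star E A j := by
  funext j
  ext x
  simp only [reduce, Set.mem_setOf_eq, Set.mem_image]
  constructor
  · rintro ⟨⟨x₀, hx₀, rfl⟩, hnest⟩
    exact ⟨x₀, ⟨hx₀, fun e he =>
      (nested_map h φ hφ e x₀).mp (hnest (φ e) ⟨e, he, rfl⟩)⟩, rfl⟩
  · rintro ⟨x₀, ⟨hx₀, hnest⟩, rfl⟩
    refine ⟨⟨x₀, hx₀, rfl⟩, ?_⟩
    rintro e ⟨e₀, he₀, rfl⟩
    exact (nested_map h φ hφ e₀ x₀).mpr (hnest e₀ he₀)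

lemma CSL.buildN_image (h : OrderReversingInvolution star) (φ : U ≃o U)
    (hφ : ∀ s : U, φ (star s) = star (φ s)) {I : Type*} :
    ∀ (L : List I) (A : I → Set U),
      buildN star L (fun j => φ '' A j) = φ '' buildN star L A := by
  intro L
  induction L with
  | nil => intro A; simp [buildN]
  | cons i L ih =>
    intro A
    show maxSet (φ '' A i) ∪ _ = _
    rw [maxSet_image φ (A i), reduce_image h φ hφ (maxSet (A i)) A,
      ih (reduce star (maxSet (A i)) A)]
    exact (Set.image_union φ _ _).symm

lemma CSL.exists_orderList {I : Type*} [Fintype I] [PartialOrder I] :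
    ∃ L : List I, (∀ i : I, i ∈ L) ∧ L.Pairwise (fun a b => ¬ b < a) := by
  classical
  suffices hs : ∀ s : Finset I, ∃ L : List I,
      (∀ i, i ∈ L ↔ i ∈ s) ∧ L.Pairwise (fun a b => ¬ b < a) by
    obtain ⟨L, h1, h2⟩ := hs Finset.univ
    exact ⟨L, fun i => (h1 i).mpr (Finset.mem_univ i), h2⟩
  intro s
  induction s using Finset.strongInduction with
  | _ s ihs =>
    rcases s.eq_empty_or_nonempty with rfl | hne
    · exact ⟨[], by simp, List.Pairwise.nil⟩
    · obtain ⟨m, hm, hmin⟩ : ∃ m ∈ s, ∀ y ∈ s, ¬ y < m := by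
        obtain ⟨m, hm⟩ := Finset.exists_minimal hne
        exact ⟨m, hm.1, fun y hy hlt => hlt.not_ge (hm.2 hy hlt.le)⟩
      obtain ⟨L, h1, h2⟩ := ihs (s.erase m) (Finset.erase_ssubset hm)
      refine ⟨m :: L, ?_, ?_⟩
      · intro x
        by_cases hxm : x = m <;>
          simp [hxm, hm, h1, Finset.mem_erase, List.mem_cons]
      · exact List.pairwise_cons.mpr
          ⟨fun j hj => hmin j (Finset.mem_of_mem_erase ((h1 j).mp hj)), h2⟩

end CSLMain

/-- **Canonical Splinter Lemma.** -/
theorem canonical_splinter_lemma [Lattice U] [Fintype U]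
    (star : U → U) (hstar : OrderReversingInvolution star)
    {I : Type*} [Fintype I] [PartialOrder I] :
    ∃ N : (I → Set U) → Set U,
      ∀ A : I → Set U, (∀ i, (A i).Nonempty) →
        (∀ i, ∀ a ∈ A i, star a ∈ A i) → SplintersHier star A →
        ((∀ a ∈ N A, ∀ b ∈ N A, Nested star a b) ∧
         (∀ i, ∃ a ∈ A i, a ∈ N A) ∧
         ∀ φ : U ≃o U, (∀ s : U, φ (star s) = star (φ s)) →
           SplintersHier star (fun i => φ '' A i) →
           N (fun i => φ '' A i) = φ '' N A) := by
  classical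
  obtain ⟨L, hLmem, hLpair⟩ := CSL.exists_orderList (I := I)
  refine ⟨fun A => CSL.buildN star L A, ?_⟩
  intro A hne hsc hsp
  have hsp' : CSL.SplinterOn star L A := fun i _ j _ a ha b hb => hsp i j a ha b hb
  obtain ⟨hsub, hnested, hmeets⟩ :=
    CSL.buildN_spec hstar L hLpair A (fun i _ => hne i) (fun i _ => hsc i) hsp'
  refine ⟨hnested, fun i => hmeets i (hLmem i), ?_⟩
  intro φ hφ _
  exact CSL.buildN_image hstar φ hφ L A
end

section
/- Let r and s be two circle separations of a finite cyclically ordered set V. If r and s cross, then all four corner separations of r and s are again circle separations. -/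
/-!
If two circle separations of a finite cyclically ordered set cross, then all
four of their corner separations are again circle separations.
-/

/-- A cyclic interval of `ZMod n`: the empty set, all of `ZMod n`, or a set of
the form `{a, a+1, …, a+k}`. -/
def CyclicInterval {n : ℕ} (A : Set (ZMod n)) : Prop :=
  A = ∅ ∨ A = Set.univ ∨
    ∃ (a : ZMod n) (k : ℕ), A = (fun i : ℕ => a + (i : ZMod n)) '' {i | i ≤ k}

/-- An oriented bipartition-candidate of `ZMod n`: a pair of subsets. -/
abbrev Bip (n : ℕ) := Set (ZMod n) × Set (ZMod n)

/-- The involution `(A,B) ↦ (B,A)`. -/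
def bipInv {n : ℕ} (p : Bip n) : Bip n := (p.2, p.1)

/-- The partial order `(A,B) ≤ (C,D)` iff `A ⊆ C` and `B ⊇ D`. -/
def bipLE {n : ℕ} (p q : Bip n) : Prop := p.1 ⊆ q.1 ∧ q.2 ⊆ p.2

/-- The join `(A,B) ∨ (C,D) = (A ∪ C, B ∩ D)`. -/
def bipJoin {n : ℕ} (p q : Bip n) : Bip n := (p.1 ∪ q.1, p.2 ∩ q.2)

/-- The meet `(A,B) ∧ (C,D) = (A ∩ C, B ∪ D)`. -/
def bipMeet {n : ℕ} (p q : Bip n) : Bip n := (p.1 ∩ q.1, p.2 ∪ q.2)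

/-- `(A,B)` is a bipartition of `ZMod n`. -/
def IsBip {n : ℕ} (p : Bip n) : Prop :=
  p.1 ∩ p.2 = ∅ ∧ p.1 ∪ p.2 = Set.univ

/-- `(A,B)` is a circle separation: a bipartition of `ZMod n` into two cyclic
intervals. -/
def IsCircleSep {n : ℕ} (p : Bip n) : Prop :=
  IsBip p ∧ CyclicInterval p.1 ∧ CyclicInterval p.2

/-- Two bipartitions are nested if they have `bipLE`-comparable orientations. -/
def bipNested {n : ℕ} (p q : Bip n) : Prop :=
  bipLE p q ∨ bipLE p (bipInv q) ∨ bipLE (bipInv p) q ∨ bipLE (bipInv p) (bipInv q)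

namespace CircleSepAux

variable {n : ℕ}

/-- The arc of length `k+1` starting at `a`. -/
def arc (a : ZMod n) (k : ℕ) : Set (ZMod n) := {x | (x - a).val ≤ k}

lemma mem_arc {a x : ZMod n} {k : ℕ} : x ∈ arc a k ↔ (x - a).val ≤ k := Iff.rfl

variable [NeZero n]

lemma val_add_cases (u v : ZMod n) :
    (u + v).val = u.val + v.val ∨
      ((u + v).val = u.val + v.val - n ∧ n ≤ u.val + v.val) := by
  have h := ZMod.val_add u v
  have hu := ZMod.val_lt u
  have hv := ZMod.val_lt v
  rcases Nat.lt_or_ge (u.val + v.val) n with h' | h'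
  · left; rw [h, Nat.mod_eq_of_lt h']
  · right
    refine ⟨?_, h'⟩
    rw [h, Nat.mod_eq_sub_mod h', Nat.mod_eq_of_lt (by omega)]

lemma val_add_lt {u v : ZMod n} (h : u.val + v.val < n) :
    (u + v).val = u.val + v.val := by
  rcases val_add_cases u v with h' | ⟨_, h'⟩
  · exact h'
  · omega

lemma val_sub_le {u v : ZMod n} (h : v.val ≤ u.val) :
    (u - v).val = u.val - v.val := by
  have h1 : (u - v) + v = u := by ring
  have h2 := val_add_cases (u - v) v
  rw [h1] at h2
  have h3 : (u - v).val < n := ZMod.val_lt _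
  have h4 : u.val < n := ZMod.val_lt _
  omega

lemma val_neg {z : ZMod n} (h : z ≠ 0) : (-z).val = n - z.val := by
  have h1 : (-z) + z = 0 := by ring
  have h2 := val_add_cases (-z) z
  rw [h1, ZMod.val_zero] at h2
  have h3 : z.val ≠ 0 := fun h0 => h ((ZMod.val_eq_zero z).mp h0)
  have h4 : (-z).val < n := ZMod.val_lt _
  omega

lemma arc_eq_image {a : ZMod n} {k : ℕ} (hk : k < n) :
    arc a k = (fun i : ℕ => a + (i : ZMod n)) '' {i | i ≤ k} := by
  ext x
  constructor
  · intro hx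
    refine ⟨(x - a).val, hx, ?_⟩
    simp [ZMod.natCast_zmod_val]
  · rintro ⟨i, hi, rfl⟩
    have : ((i : ZMod n)).val = i := ZMod.val_cast_of_lt (lt_of_le_of_lt hi hk)
    simpa [mem_arc, this] using hi

lemma arc_cyclic {a : ZMod n} {k : ℕ} (hk : k < n) : CyclicInterval (arc a k) :=
  Or.inr (Or.inr ⟨a, k, arc_eq_image hk⟩)

lemma cyclic_to_arc {A : Set (ZMod n)} (hA : CyclicInterval A)
    (hne : A.Nonempty) (hproper : A ≠ Set.univ) :
    ∃ (a : ZMod n) (k : ℕ), k + 1 < n ∧ A = arc a k := by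
  rcases hA with h | h | ⟨a, k, h⟩
  · exact absurd h (Set.nonempty_iff_ne_empty.mp hne)
  · exact absurd h hproper
  · have hkn : k < n - 1 := by
      by_contra hcon
      apply hproper
      rw [h]
      apply Set.eq_univ_of_forall
      intro x
      refine ⟨(x - a).val, ?_, ?_⟩
      · have := ZMod.val_lt (x - a); simp only [Set.mem_setOf_eq]; omega
      · simp [ZMod.natCast_zmod_val]
    exact ⟨a, k, by omega, by rw [h, arc_eq_image (by omega)]⟩

lemma compl_arc {a : ZMod n} {k : ℕ} (hk : k + 1 < n) :
    (arc a k)ᶜ = arc (a + ((k + 1 : ℕ) : ZMod n)) (n - k - 2) := by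
  have hv : (((k + 1 : ℕ)) : ZMod n).val = k + 1 := ZMod.val_cast_of_lt hk
  ext x
  have h3 : (x - (a + ((k + 1 : ℕ) : ZMod n))) + ((k + 1 : ℕ) : ZMod n) = x - a := by
    ring
  have h2 := val_add_cases (x - (a + ((k + 1 : ℕ) : ZMod n))) ((k + 1 : ℕ) : ZMod n)
  rw [h3, hv] at h2
  have h4 : (x - (a + ((k + 1 : ℕ) : ZMod n))).val < n := ZMod.val_lt _
  have h5 : (x - a).val < n := ZMod.val_lt _
  simp only [Set.mem_compl_iff, mem_arc, not_le]
  omega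

/-- Union of crossing arcs, oriented case: `y ∈ X`, `x ∉ Y`. -/
lemma union_arc {x y : ZMod n} {k l : ℕ} (hk : k + 1 < n) (hl : l + 1 < n)
    (hy : y ∈ arc x k) (hx : x ∉ arc y l)
    (hYX : (arc y l ∩ (arc x k)ᶜ).Nonempty)
    (hcc : ((arc x k)ᶜ ∩ (arc y l)ᶜ).Nonempty) :
    ∃ (z : ZMod n) (m : ℕ), m + 1 < n ∧ arc x k ∪ arc y l = arc z m := by
  set d := (y - x).val with hd
  have hdk : d ≤ k := hy
  have hd0 : d ≠ 0 := by
    intro h0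
    apply hx
    have h1 : y - x = 0 := (ZMod.val_eq_zero _).mp h0
    have hxy : x - y = 0 := by linear_combination -h1
    simp [mem_arc, hxy]
  have hxy : (x - y).val = n - d := by
    have h1 : x - y = -(y - x) := by ring
    rw [h1, val_neg (fun h0 => hd0 ((ZMod.val_eq_zero _).mpr h0))]
  have hnl : l < n - d := by
    have h1 := hx
    simp only [mem_arc, not_le, hxy] at h1
    omega
  -- from the witness outside both arcs: d + l + 1 < n
  obtain ⟨w, hw1, hw2⟩ := hcc
  have he : k < (w - x).val := by simpa [mem_arc, not_le] using hw1
  have hwlt : (w - x).val < n := ZMod.val_lt _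
  have hwy : (w - y).val = (w - x).val - d := by
    have h1 : w - y = (w - x) - (y - x) := by ring
    rw [h1, val_sub_le (by omega)]
  have hwl : l < (w - x).val - d := by
    have h1 := hw2
    simp only [Set.mem_compl_iff, mem_arc, not_le, hwy] at h1
    omega
  have hm : d + l + 1 < n := by omega
  -- from the witness in Y \ X : k < d + l
  obtain ⟨u, hu1, hu2⟩ := hYX
  have hf : (u - y).val ≤ l := hu1
  have hux : (u - x).val = (u - y).val + d := by
    have h3 : u - x = (u - y) + (y - x) := by ring
    rw [h3, val_add_lt (by omega)]
  have hkdl : k < d + l := by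
    have h1 := hu2
    simp only [Set.mem_compl_iff, mem_arc, not_le, hux] at h1
    omega
  refine ⟨x, d + l, hm, ?_⟩
  ext z
  simp only [Set.mem_union, mem_arc]
  constructor
  · rintro (h | h)
    · omega
    · have h1 : z - x = (z - y) + (y - x) := by ring
      rw [h1, val_add_lt (by omega)]
      omega
  · intro h
    rcases le_or_gt (z - x).val k with h' | h'
    · exact Or.inl h'
    · right
      have h1 : z - y = (z - x) - (y - x) := by ring
      rw [h1, val_sub_le (by omega)]
      omega

/-- Union of crossing arcs, general. -/
lemma cross_union {x y : ZMod n} {k l : ℕ} (hk : k + 1 < n) (hl : l + 1 < n)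
    (h11 : (arc x k ∩ arc y l).Nonempty)
    (h10 : (arc x k ∩ (arc y l)ᶜ).Nonempty)
    (h01 : ((arc x k)ᶜ ∩ arc y l).Nonempty)
    (h00 : ((arc x k)ᶜ ∩ (arc y l)ᶜ).Nonempty) :
    ∃ (z : ZMod n) (m : ℕ), m + 1 < n ∧ arc x k ∪ arc y l = arc z m := by
  by_cases hy : y ∈ arc x k
  · by_cases hx : x ∈ arc y l
    · -- both in : contradiction
      exfalso
      set d := (y - x).val with hd
      by_cases hd0 : d = 0
      · have h1 : y - x = 0 := (ZMod.val_eq_zero _).mp hd0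
        have hxyeq : x = y := by linear_combination -h1
        subst hxyeq
        obtain ⟨u, hu1, hu2⟩ := h10
        obtain ⟨v, hv1, hv2⟩ := h01
        simp only [mem_arc, Set.mem_compl_iff, not_le] at hu1 hu2 hv1 hv2
        omega
      · have hxy : (x - y).val = n - d := by
          have h1 : x - y = -(y - x) := by ring
          rw [h1, val_neg (fun h0 => hd0 ((ZMod.val_eq_zero _).mpr h0))]
        have hxl : n - d ≤ l := by simpa [mem_arc, hxy] using hx
        have hdk : d ≤ k := hy
        obtain ⟨w, hw1, hw2⟩ := h00
        have he : k < (w - x).val := by simpa [mem_arc, not_le] using hw1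
        have hwlt : (w - x).val < n := ZMod.val_lt _
        have hwy : (w - y).val = (w - x).val - d := by
          have h1 : w - y = (w - x) - (y - x) := by ring
          rw [h1, val_sub_le (by omega)]
        have hwl : l < (w - y).val := by simpa [mem_arc, not_le] using hw2
        have hdlt : d < n := ZMod.val_lt _
        omega
    · exact union_arc hk hl hy hx (by rwa [Set.inter_comm] at h01) h00
  · -- y ∉ X ; show x ∈ Y, then swap roles
    have hx : x ∈ arc y l := by
      obtain ⟨w, hw1, hw2⟩ := h11
      have he : (w - x).val ≤ k := hw1
      have hf : (w - y).val ≤ l := hw2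
      rcases le_or_gt (w - y).val (w - x).val with h' | h'
      · exfalso
        apply hy
        have h1 : y - x = (w - x) - (w - y) := by ring
        simp only [mem_arc, h1, val_sub_le h']
        omega
      · have h1 : x - y = (w - y) - (w - x) := by ring
        simp only [mem_arc, h1, val_sub_le (Nat.le_of_lt h')]
        omega
    obtain ⟨z, m, hm, heq⟩ :=
      union_arc hl hk hx hy h10 (by rwa [Set.inter_comm] at h00)
    exact ⟨z, m, hm, by rw [Set.union_comm]; exact heq⟩

/-- The corner lemma: for crossing cyclic-interval sides, `(X ∪ Y, Xᶜ ∩ Yᶜ)`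
is a circle separation. -/
lemma corner {X Y : Set (ZMod n)}
    (hX : ∃ (a : ZMod n) (k : ℕ), k + 1 < n ∧ X = arc a k)
    (hY : ∃ (a : ZMod n) (k : ℕ), k + 1 < n ∧ Y = arc a k)
    (h11 : (X ∩ Y).Nonempty) (h10 : (X ∩ Yᶜ).Nonempty)
    (h01 : (Xᶜ ∩ Y).Nonempty) (h00 : (Xᶜ ∩ Yᶜ).Nonempty) :
    IsCircleSep (X ∪ Y, Xᶜ ∩ Yᶜ) := by
  obtain ⟨a, k, hk, rfl⟩ := hX
  obtain ⟨c, l, hl, rfl⟩ := hY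
  obtain ⟨z, m, hm, heq⟩ := cross_union hk hl h11 h10 h01 h00
  have hcompl : (arc a k)ᶜ ∩ (arc c l)ᶜ = (arc z m)ᶜ := by
    rw [← heq, Set.compl_union]
  refine ⟨⟨?_, ?_⟩, ?_, ?_⟩
  · simp only [hcompl, heq]
    exact Set.inter_compl_self _
  · simp only [hcompl, heq]
    exact Set.union_compl_self _
  · simp only [heq]
    exact arc_cyclic (by omega)
  · simp only [hcompl, compl_arc hm]
    exact arc_cyclic (by omega)

end CircleSepAux

/-- **If two circle separations cross, then all four of their corner
separations are circle separations.** -/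
theorem circle_sep_corners {n : ℕ} (hn : 0 < n) (r s : Bip n)
    (hr : IsCircleSep r) (hs : IsCircleSep s) (hcross : ¬ bipNested r s) :
    ∀ r' s' : Bip n, (r' = r ∨ r' = bipInv r) → (s' = s ∨ s' = bipInv s) →
      IsCircleSep (bipJoin r' s') := by
  intro r' s' hr' hs'
  haveI : NeZero n := ⟨hn.ne'⟩
  open CircleSepAux in
  obtain ⟨⟨hrd, hru⟩, hrA, hrB⟩ := hr
  obtain ⟨⟨hsd, hsu⟩, hsC, hsD⟩ := hs
  have hB : r.2 = r.1ᶜ := by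
    ext x
    constructor
    · intro hx hx'
      exact absurd (Set.mem_inter hx' hx) (by simp [hrd])
    · intro hx
      rcases (hru.symm ▸ Set.mem_univ x : x ∈ r.1 ∪ r.2) with h | h
      · exact absurd h hx
      · exact h
  have hD : s.2 = s.1ᶜ := by
    ext x
    constructor
    · intro hx hx'
      exact absurd (Set.mem_inter hx' hx) (by simp [hsd])
    · intro hx
      rcases (hsu.symm ▸ Set.mem_univ x : x ∈ s.1 ∪ s.2) with h | h
      · exact absurd h hx
      · exact h
  rw [bipNested] at hcross
  push_neg at hcross
  obtain ⟨hc1, hc2, hc3, hc4⟩ := hcross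
  -- the four crossing nonemptiness conditions
  have h10 : (r.1 ∩ s.1ᶜ).Nonempty := by
    have hns : ¬ r.1 ⊆ s.1 := fun h => hc1 ⟨h, by
      rw [hB, hD]; exact Set.compl_subset_compl.mpr h⟩
    rcases Set.not_subset.mp hns with ⟨x, hx1, hx2⟩
    exact ⟨x, hx1, hx2⟩
  have h11 : (r.1 ∩ s.1).Nonempty := by
    have hns : ¬ r.1 ⊆ s.1ᶜ := fun h => hc2 ⟨by rwa [bipInv, hD], by
      rw [bipInv, hB]
      simpa using Set.compl_subset_compl.mpr h⟩
    rcases Set.not_subset.mp hns with ⟨x, hx1, hx2⟩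
    exact ⟨x, hx1, by simpa using hx2⟩
  have h00 : (r.1ᶜ ∩ s.1ᶜ).Nonempty := by
    have hns : ¬ r.1ᶜ ⊆ s.1 := fun h => hc3 ⟨by rwa [bipInv, hB], by
      rw [bipInv, hD]
      simpa using Set.compl_subset_compl.mpr h⟩
    rcases Set.not_subset.mp hns with ⟨x, hx1, hx2⟩
    exact ⟨x, hx1, hx2⟩
  have h01 : (r.1ᶜ ∩ s.1).Nonempty := by
    have hns : ¬ r.1ᶜ ⊆ s.1ᶜ := fun h => hc4 ⟨by rw [bipInv, bipInv, hB, hD]; exact h, by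
      rw [bipInv, bipInv]
      simpa using Set.compl_subset_compl.mpr h⟩
    rcases Set.not_subset.mp hns with ⟨x, hx1, hx2⟩
    exact ⟨x, hx1, by simpa using hx2⟩
  -- arc normal forms
  have hAarc : ∃ (a : ZMod n) (k : ℕ), k + 1 < n ∧ r.1 = arc a k := by
    apply cyclic_to_arc hrA (h11.mono Set.inter_subset_left)
    intro h
    rcases h00 with ⟨x, hx, _⟩
    exact hx (h ▸ Set.mem_univ x)
  have hCarc : ∃ (a : ZMod n) (k : ℕ), k + 1 < n ∧ s.1 = arc a k := by
    apply cyclic_to_arc hsC (h11.mono Set.inter_subset_right)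
    intro h
    rcases h00 with ⟨x, _, hx⟩
    exact hx (h ▸ Set.mem_univ x)
  have hAcarc : ∃ (a : ZMod n) (k : ℕ), k + 1 < n ∧ r.1ᶜ = arc a k := by
    obtain ⟨a, k, hk, hA⟩ := hAarc
    exact ⟨a + ((k + 1 : ℕ) : ZMod n), n - k - 2, by omega, by rw [hA, compl_arc hk]⟩
  have hCcarc : ∃ (a : ZMod n) (k : ℕ), k + 1 < n ∧ s.1ᶜ = arc a k := by
    obtain ⟨a, k, hk, hC⟩ := hCarc
    exact ⟨a + ((k + 1 : ℕ) : ZMod n), n - k - 2, by omega, by rw [hC, compl_arc hk]⟩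
  rcases hr' with h | h <;> rcases hs' with h' | h' <;> rw [h, h']
  · rw [show bipJoin r s = (r.1 ∪ s.1, r.2 ∩ s.2) from rfl, hB, hD]
    exact corner hAarc hCarc h11 h10 h01 h00
  · rw [show bipJoin r (bipInv s) = (r.1 ∪ s.2, r.2 ∩ s.1) from rfl, hB, hD]
    have h10' : (r.1 ∩ s.1ᶜᶜ).Nonempty := by rwa [compl_compl]
    have h00' : (r.1ᶜ ∩ s.1ᶜᶜ).Nonempty := by rwa [compl_compl]
    have := corner hAarc hCcarc h10 h10' h00 h00'
    rwa [compl_compl] at this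
  · rw [show bipJoin (bipInv r) s = (r.2 ∪ s.1, r.1 ∩ s.2) from rfl, hB, hD]
    have h01' : (r.1ᶜᶜ ∩ s.1).Nonempty := by rwa [compl_compl]
    have h00' : (r.1ᶜᶜ ∩ s.1ᶜ).Nonempty := by rwa [compl_compl]
    have := corner hAcarc hCarc h01 h00 h01' h00'
    rwa [compl_compl] at this
  · rw [show bipJoin (bipInv r) (bipInv s) = (r.2 ∪ s.2, r.1 ∩ s.1) from rfl, hB, hD]
    have h01' : (r.1ᶜ ∩ s.1ᶜᶜ).Nonempty := by rwa [compl_compl]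
    have h10' : (r.1ᶜᶜ ∩ s.1ᶜ).Nonempty := by rwa [compl_compl]
    have h11' : (r.1ᶜᶜ ∩ s.1ᶜᶜ).Nonempty := by rwa [compl_compl, compl_compl]
    have := corner hAcarc hCcarc h00 h01' h10' h11'
    rwa [compl_compl, compl_compl] at this
end
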